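/- arXiv:2511.21061 — 2 statements merged into one kernel-verified Lean document; each statement's English description precedes it below -/
import Mathlib

section
/- Let Γ be a finite simple graph each of whose edges is colored red, green, or blue, with R red edges, G green edges, and B blue edges, and let K be the number of properly 3-edge-colored copies of K4 in Γ. Then K ≤ (1/4)·(R·G·B)^{2/3}. -/
open scoped Classical

noncomputable section

namespace RainbowTri

variable {V : Type*} [Fintype V]

/-- The finset of edges of `Γ` having color `c` (red = 0, green = 1, blue = 2). -/
def colorEdges (Γ : SimpleGraph V) (col : Sym2 V → Fin 3) (c : Fin 3) : Finset (Sym2 V) :=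
  Finset.univ.filter (fun e => e ∈ Γ.edgeSet ∧ col e = c)

/-- The finset of rainbow triangles: 3-sets of pairwise adjacent vertices whose three
edges receive three distinct colors. -/
def rainbowTriangles (Γ : SimpleGraph V) (col : Sym2 V → Fin 3) : Finset (Finset V) :=
  Finset.univ.filter (fun s => ∃ a b c : V, s = {a, b, c} ∧
    Γ.Adj a b ∧ Γ.Adj a c ∧ Γ.Adj b c ∧
    col s(a, b) ≠ col s(a, c) ∧ col s(a, b) ≠ col s(b, c) ∧ col s(a, c) ≠ col s(b, c))

/-- The finset of properly 3-edge-colored copies of `K₄`: 4-sets of pairwise adjacent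
vertices on which each color appears on exactly two (disjoint) of the six edges. -/
def properK4s (Γ : SimpleGraph V) (col : Sym2 V → Fin 3) : Finset (Finset V) :=
  Finset.univ.filter (fun s => ∃ a b c d : V, s = {a, b, c, d} ∧
    Γ.Adj a b ∧ Γ.Adj a c ∧ Γ.Adj a d ∧ Γ.Adj b c ∧ Γ.Adj b d ∧ Γ.Adj c d ∧
    col s(a, b) = col s(c, d) ∧ col s(a, c) = col s(b, d) ∧ col s(a, d) = col s(b, c) ∧
    col s(a, b) ≠ col s(a, c) ∧ col s(a, b) ≠ col s(a, d) ∧ col s(a, c) ≠ col s(a, d))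

/-- The color pattern of a proper 3-edge-coloring of `K₄` on vertex set `Fin 4`:
opposite edges get the same color ({0,1},{2,3} ↦ 0; {0,2},{1,3} ↦ 1; {0,3},{1,2} ↦ 2). -/
def pairColor (i j : Fin 4) : Fin 3 :=
  ⟨((i.val ^^^ j.val) - 1) % 3, Nat.mod_lt _ (by norm_num)⟩

/-- `Γ` (with edge coloring `col`) is obtained from a blowup of a properly
3-edge-colored `K₄` by possibly adding a set of isolated vertices: vertices mapped to
`none` are isolated, vertices are adjacent iff they lie in distinct parts, and colors
between parts follow the proper `K₄`-pattern up to a permutation `σ` of the colors. -/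
def IsBlowupK4PlusIsolated (Γ : SimpleGraph V) (col : Sym2 V → Fin 3) : Prop :=
  ∃ (P : V → Option (Fin 4)) (σ : Equiv.Perm (Fin 3)),
    (∀ u v : V, Γ.Adj u v ↔ ∃ i j : Fin 4, i ≠ j ∧ P u = some i ∧ P v = some j) ∧
    (∀ (u v : V) (i j : Fin 4), P u = some i → P v = some j → Γ.Adj u v →
      col s(u, v) = σ (pairColor i j))

/-- As `IsBlowupK4PlusIsolated`, where moreover the four parts have equal size. -/
def IsBalancedBlowupK4PlusIsolated (Γ : SimpleGraph V) (col : Sym2 V → Fin 3) : Prop :=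
  ∃ (P : V → Option (Fin 4)) (σ : Equiv.Perm (Fin 3)),
    (∀ u v : V, Γ.Adj u v ↔ ∃ i j : Fin 4, i ≠ j ∧ P u = some i ∧ P v = some j) ∧
    (∀ (u v : V) (i j : Fin 4), P u = some i → P v = some j → Γ.Adj u v →
      col s(u, v) = σ (pairColor i j)) ∧
    (∀ i j : Fin 4, (Finset.univ.filter (fun v => P v = some i)).card
      = (Finset.univ.filter (fun v => P v = some j)).card)

/-- `Γ` (with edge coloring `col`) is a balanced blowup of a properly 3-edge-colored
`K₄` (no extra isolated vertices). -/
def IsBalancedBlowupK4 (Γ : SimpleGraph V) (col : Sym2 V → Fin 3) : Prop :=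
  ∃ (P : V → Fin 4) (σ : Equiv.Perm (Fin 3)),
    (∀ u v : V, Γ.Adj u v ↔ P u ≠ P v) ∧
    (∀ u v : V, Γ.Adj u v → col s(u, v) = σ (pairColor (P u) (P v))) ∧
    (∀ i j : Fin 4, (Finset.univ.filter (fun v => P v = i)).card
      = (Finset.univ.filter (fun v => P v = j)).card)

/-- `d⁺(u,v)`: the number of vertices `w` with `uw` blue and `vw` green. -/
def dPlus (Γ : SimpleGraph V) (col : Sym2 V → Fin 3) (u v : V) : ℕ :=
  (Finset.univ.filter (fun w => Γ.Adj u w ∧ col s(u, w) = 2 ∧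
    Γ.Adj v w ∧ col s(v, w) = 1)).card

/-- `d⁻(u,v)`: the number of vertices `w` with `uw` green and `vw` blue. -/
def dMinus (Γ : SimpleGraph V) (col : Sym2 V → Fin 3) (u v : V) : ℕ :=
  (Finset.univ.filter (fun w => Γ.Adj u w ∧ col s(u, w) = 1 ∧
    Γ.Adj v w ∧ col s(v, w) = 2)).card

/-- `d_K(u,v)`: the number of ordered pairs `(w,x)` with `wx` red, `uw`, `vx` green
and `ux`, `vw` blue. -/
def dK (Γ : SimpleGraph V) (col : Sym2 V → Fin 3) (u v : V) : ℕ :=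
  (Finset.univ.filter (fun p : V × V => Γ.Adj p.1 p.2 ∧ col s(p.1, p.2) = 0 ∧
    Γ.Adj u p.1 ∧ col s(u, p.1) = 1 ∧ Γ.Adj v p.2 ∧ col s(v, p.2) = 1 ∧
    Γ.Adj u p.2 ∧ col s(u, p.2) = 2 ∧ Γ.Adj v p.1 ∧ col s(v, p.1) = 2)).card

/-- Ordered pairs of vertices inducing a red edge. -/
def redPairs (Γ : SimpleGraph V) (col : Sym2 V → Fin 3) : Finset (V × V) :=
  Finset.univ.filter (fun p => Γ.Adj p.1 p.2 ∧ col s(p.1, p.2) = 0)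

/-- The set `S` of ordered tuples `(u,v,x,y)` with `uv` red, `ux`, `uy` blue and
`vx`, `vy` green (`x = y` allowed). -/
def tupleSet (Γ : SimpleGraph V) (col : Sym2 V → Fin 3) : Finset (V × V × V × V) :=
  Finset.univ.filter (fun t => Γ.Adj t.1 t.2.1 ∧ col s(t.1, t.2.1) = 0 ∧
    Γ.Adj t.1 t.2.2.1 ∧ col s(t.1, t.2.2.1) = 2 ∧
    Γ.Adj t.1 t.2.2.2 ∧ col s(t.1, t.2.2.2) = 2 ∧
    Γ.Adj t.2.1 t.2.2.1 ∧ col s(t.2.1, t.2.2.1) = 1 ∧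
    Γ.Adj t.2.1 t.2.2.2 ∧ col s(t.2.1, t.2.2.2) = 1)

set_option maxHeartbeats 1000000

section Key

variable (Γ : SimpleGraph V) (col : Sym2 V → Fin 3)

/-- The K4 pattern on an ordered 4-tuple: `uv, wx` have color `c0`; `uw, vx` color `c1`;
`ux, vw` color `c2`. -/
def Good (c0 c1 c2 : Fin 3) (u v w x : V) : Prop :=
  Γ.Adj u v ∧ col s(u, v) = c0 ∧ Γ.Adj w x ∧ col s(w, x) = c0 ∧
  Γ.Adj u w ∧ col s(u, w) = c1 ∧ Γ.Adj v x ∧ col s(v, x) = c1 ∧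
  Γ.Adj u x ∧ col s(u, x) = c2 ∧ Γ.Adj v w ∧ col s(v, w) = c2

/-- Ordered tuples realizing the K4 pattern. -/
def Pset (c0 c1 c2 : Fin 3) : Finset (V × V × V × V) :=
  Finset.univ.filter fun t => Good Γ col c0 c1 c2 t.1 t.2.1 t.2.2.1 t.2.2.2

/-- Vertices `x` with `ux` of color `c2` and `vx` of color `c1`. -/
def Dx (c1 c2 : Fin 3) (u v : V) : Finset V :=
  Finset.univ.filter fun x => Γ.Adj u x ∧ col s(u, x) = c2 ∧ Γ.Adj v x ∧ col s(v, x) = c1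

/-- The generalized tuple set: `(u,v,x,y)` with `uv` of color `c0` and
`x, y ∈ Dx u v`. -/
def Sgen (c0 c1 c2 : Fin 3) : Finset (V × V × V × V) :=
  Finset.univ.filter fun t => Γ.Adj t.1 t.2.1 ∧ col s(t.1, t.2.1) = c0 ∧
    t.2.2.1 ∈ Dx Γ col c1 c2 t.1 t.2.1 ∧ t.2.2.2 ∈ Dx Γ col c1 c2 t.1 t.2.1

private lemma good_symm1 {c0 c1 c2 : Fin 3} {u v w x : V}
    (h : Good Γ col c0 c1 c2 u v w x) : Good Γ col c0 c1 c2 v u x w := by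
  obtain ⟨huv, cuv, hwx, cwx, huw, cuw, hvx, cvx, hux, cux, hvw, cvw⟩ := h
  exact ⟨huv.symm, by rw [Sym2.eq_swap]; exact cuv, hwx.symm, by rw [Sym2.eq_swap]; exact cwx,
    hvx, cvx, huw, cuw, hvw, cvw, hux, cux⟩

private lemma good_symm2 {c0 c1 c2 : Fin 3} {u v w x : V}
    (h : Good Γ col c0 c1 c2 u v w x) : Good Γ col c0 c1 c2 w x u v := by
  obtain ⟨huv, cuv, hwx, cwx, huw, cuw, hvx, cvx, hux, cux, hvw, cvw⟩ := h
  exact ⟨hwx, cwx, huv, cuv, huw.symm, by rw [Sym2.eq_swap]; exact cuw,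
    hvx.symm, by rw [Sym2.eq_swap]; exact cvx, hvw.symm, by rw [Sym2.eq_swap]; exact cvw,
    hux.symm, by rw [Sym2.eq_swap]; exact cux⟩

private lemma quad_perm2 (a b c d : V) :
    ({b, a, d, c} : Finset V) = {a, b, c, d} ∧ ({c, d, a, b} : Finset V) = {a, b, c, d} ∧
    ({d, c, b, a} : Finset V) = {a, b, c, d} := by
  refine ⟨?_, ?_, ?_⟩ <;>
    (ext z; simp only [Finset.mem_insert, Finset.mem_singleton]; tauto)

private lemma fiber_four {c0 c1 c2 : Fin 3} {u v w x : V}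
    (hg : Good Γ col c0 c1 c2 u v w x) {s : Finset V}
    (hs : ({u, v, w, x} : Finset V) = s) :
    4 ≤ ((Pset Γ col c0 c1 c2).filter
      (fun t => ({t.1, t.2.1, t.2.2.1, t.2.2.2} : Finset V) = s)).card := by
  classical
  set t1 : V × V × V × V := (u, v, w, x) with ht1
  set t2 : V × V × V × V := (v, u, x, w) with ht2
  set t3 : V × V × V × V := (w, x, u, v) with ht3
  set t4 : V × V × V × V := (x, w, v, u) with ht4
  obtain ⟨huv, cuv, hwx, cwx, huw, cuw, hvx, cvx, hux, cux, hvw, cvw⟩ := hg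
  have hg1 : Good Γ col c0 c1 c2 u v w x :=
    ⟨huv, cuv, hwx, cwx, huw, cuw, hvx, cvx, hux, cux, hvw, cvw⟩
  have hg2 := good_symm1 Γ col hg1
  have hg3 := good_symm2 Γ col hg1
  have hg4 := good_symm1 Γ col hg3
  obtain ⟨p1, p2, p3⟩ := quad_perm2 u v w x
  have hset2 : ({v, u, x, w} : Finset V) = s := p1.trans hs
  have hset3 : ({w, x, u, v} : Finset V) = s := p2.trans hs
  have hset4 : ({x, w, v, u} : Finset V) = s := p3.trans hs
  have hmem : ∀ t' : V × V × V × V, Good Γ col c0 c1 c2 t'.1 t'.2.1 t'.2.2.1 t'.2.2.2 →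
      ({t'.1, t'.2.1, t'.2.2.1, t'.2.2.2} : Finset V) = s →
      t' ∈ (Pset Γ col c0 c1 c2).filter
        (fun t => ({t.1, t.2.1, t.2.2.1, t.2.2.2} : Finset V) = s) := by
    intro t' h1 h2
    rw [Finset.mem_filter]
    exact ⟨by rw [Pset, Finset.mem_filter]; exact ⟨Finset.mem_univ _, h1⟩, h2⟩
  have m1 := hmem t1 hg1 hs
  have m2 := hmem t2 hg2 hset2
  have m3 := hmem t3 hg3 hset3
  have m4 := hmem t4 hg4 hset4
  have hsub : ({t1, t2, t3, t4} : Finset (V × V × V × V)) ⊆ (Pset Γ col c0 c1 c2).filter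
      (fun t => ({t.1, t.2.1, t.2.2.1, t.2.2.2} : Finset V) = s) := by
    intro t ht
    simp only [Finset.mem_insert, Finset.mem_singleton] at ht
    rcases ht with rfl | rfl | rfl | rfl
    · exact m1
    · exact m2
    · exact m3
    · exact m4
  have n12 : t1 ≠ t2 := fun h => huv.ne (congrArg Prod.fst h)
  have n13 : t1 ≠ t3 := fun h => huw.ne (congrArg Prod.fst h)
  have n14 : t1 ≠ t4 := fun h => hux.ne (congrArg Prod.fst h)
  have n23 : t2 ≠ t3 := fun h => hvw.ne (congrArg Prod.fst h)
  have n24 : t2 ≠ t4 := fun h => hvx.ne (congrArg Prod.fst h)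
  have n34 : t3 ≠ t4 := fun h => hwx.ne (congrArg Prod.fst h)
  have hcard : ({t1, t2, t3, t4} : Finset (V × V × V × V)).card = 4 := by
    rw [Finset.card_insert_of_notMem (by simp [n12, n13, n14]),
      Finset.card_insert_of_notMem (by simp [n23, n24]),
      Finset.card_insert_of_notMem (by simp [n34]), Finset.card_singleton]
  calc 4 = ({t1, t2, t3, t4} : Finset (V × V × V × V)).card := hcard.symm
    _ ≤ _ := Finset.card_le_card hsub

private lemma quad_perm (a b c d : V) :
    ({a, b, d, c} : Finset V) = {a, b, c, d} ∧ ({a, c, b, d} : Finset V) = {a, b, c, d} ∧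
    ({a, c, d, b} : Finset V) = {a, b, c, d} ∧ ({a, d, b, c} : Finset V) = {a, b, c, d} ∧
    ({a, d, c, b} : Finset V) = {a, b, c, d} := by
  refine ⟨?_, ?_, ?_, ?_, ?_⟩ <;>
    (ext z; simp only [Finset.mem_insert, Finset.mem_singleton]; tauto)

private lemma aux_three (p q r y : Fin 3) (hpq : p ≠ q) (hpr : p ≠ r) (hqr : q ≠ r) :
    y = p ∨ y = q ∨ y = r := by
  revert p q r y; decide

/-- Each properly colored K4 contributes at least 4 tuples to every pattern set. -/
lemma four_K_le_Pset (c0 c1 c2 : Fin 3) (h01 : c0 ≠ c1) (h02 : c0 ≠ c2) (h12 : c1 ≠ c2) :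
    4 * (properK4s Γ col).card ≤ (Pset Γ col c0 c1 c2).card := by
  have hmem : ∀ t ∈ Pset Γ col c0 c1 c2,
      ({t.1, t.2.1, t.2.2.1, t.2.2.2} : Finset V) ∈ properK4s Γ col := by
    intro t ht
    rw [Pset, Finset.mem_filter] at ht
    obtain ⟨-, huv, cuv, hwx, cwx, huw, cuw, hvx, cvx, hux, cux, hvw, cvw⟩ := ht
    rw [properK4s, Finset.mem_filter]
    refine ⟨Finset.mem_univ _, t.1, t.2.1, t.2.2.1, t.2.2.2, rfl, huv, huw, hux, hvw, hvx, hwx,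
      by rw [cuv, cwx], by rw [cuw, cvx], by rw [cux, cvw], ?_, ?_, ?_⟩
    · rw [cuv, cuw]; exact h01
    · rw [cuv, cux]; exact h02
    · rw [cuw, cux]; exact h12
  rw [Finset.card_eq_sum_card_fiberwise hmem]
  have hbig : ∀ s ∈ properK4s Γ col, 4 ≤ ((Pset Γ col c0 c1 c2).filter
      (fun t => ({t.1, t.2.1, t.2.2.1, t.2.2.2} : Finset V) = s)).card := by
    intro s hs
    rw [properK4s, Finset.mem_filter] at hs
    obtain ⟨-, a, b, c, d, hset, hab, hac, had, hbc, hbd, hcd, e1, e2, e3, m12, m13, m23⟩ := hs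
    have hc0 := aux_three (col s(a, b)) (col s(a, c)) (col s(a, d)) c0 m12 m13 m23
    have hc1 := aux_three (col s(a, b)) (col s(a, c)) (col s(a, d)) c1 m12 m13 m23
    have hc2 := aux_three (col s(a, b)) (col s(a, c)) (col s(a, d)) c2 m12 m13 m23
    obtain ⟨q1, q2, q3, q4, q5⟩ := quad_perm a b c d
    have setbd : ({a, b, d, c} : Finset V) = s := q1.trans hset.symm
    have setcb : ({a, c, b, d} : Finset V) = s := q2.trans hset.symm
    have setcd : ({a, c, d, b} : Finset V) = s := q3.trans hset.symm
    have setdb : ({a, d, b, c} : Finset V) = s := q4.trans hset.symm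
    have setdc : ({a, d, c, b} : Finset V) = s := q5.trans hset.symm
    rcases hc0 with h0 | h0 | h0
    · -- c0 = col ab
      rcases hc1 with h1 | h1 | h1
      · exact absurd (h0.trans h1.symm) h01
      · -- c1 = col ac, hence c2 = col ad
        have h2 : c2 = col s(a, d) := by
          rcases hc2 with h2 | h2 | h2
          · exact absurd (h0.trans h2.symm) h02
          · exact absurd (h1.trans h2.symm) h12
          · exact h2
        refine fiber_four Γ col ?_ hset.symm
        exact ⟨hab, h0.symm, hcd, by rw [← e1]; exact h0.symm, hac, h1.symm,
          hbd, by rw [← e2]; exact h1.symm, had, h2.symm, hbc, by rw [← e3]; exact h2.symm⟩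
      · -- c1 = col ad, c2 = col ac : tuple (a,b,d,c)
        have h2 : c2 = col s(a, c) := by
          rcases hc2 with h2 | h2 | h2
          · exact absurd (h0.trans h2.symm) h02
          · exact h2
          · exact absurd (h1.trans h2.symm) h12
        refine fiber_four Γ col ?_ setbd
        exact ⟨hab, h0.symm, hcd.symm, by rw [Sym2.eq_swap, ← e1]; exact h0.symm,
          had, h1.symm, hbc, by rw [← e3]; exact h1.symm,
          hac, h2.symm, hbd, by rw [← e2]; exact h2.symm⟩
    · -- c0 = col ac
      rcases hc1 with h1 | h1 | h1
      · -- c1 = col ab, c2 = col ad : tuple (a,c,b,d)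
        have h2 : c2 = col s(a, d) := by
          rcases hc2 with h2 | h2 | h2
          · exact absurd (h1.trans h2.symm) h12
          · exact absurd (h0.trans h2.symm) h02
          · exact h2
        refine fiber_four Γ col ?_ setcb
        exact ⟨hac, h0.symm, hbd, by rw [← e2]; exact h0.symm,
          hab, h1.symm, hcd, by rw [← e1]; exact h1.symm,
          had, h2.symm, hbc.symm, by rw [Sym2.eq_swap, ← e3]; exact h2.symm⟩
      · exact absurd (h0.trans h1.symm) h01
      · -- c1 = col ad, c2 = col ab : tuple (a,c,d,b)
        have h2 : c2 = col s(a, b) := by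
          rcases hc2 with h2 | h2 | h2
          · exact h2
          · exact absurd (h0.trans h2.symm) h02
          · exact absurd (h1.trans h2.symm) h12
        refine fiber_four Γ col ?_ setcd
        exact ⟨hac, h0.symm, hbd.symm, by rw [Sym2.eq_swap, ← e2]; exact h0.symm,
          had, h1.symm, hbc.symm, by rw [Sym2.eq_swap, ← e3]; exact h1.symm,
          hab, h2.symm, hcd, by rw [← e1]; exact h2.symm⟩
    · -- c0 = col ad
      rcases hc1 with h1 | h1 | h1
      · -- c1 = col ab, c2 = col ac : tuple (a,d,b,c)
        have h2 : c2 = col s(a, c) := by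
          rcases hc2 with h2 | h2 | h2
          · exact absurd (h1.trans h2.symm) h12
          · exact h2
          · exact absurd (h0.trans h2.symm) h02
        refine fiber_four Γ col ?_ setdb
        exact ⟨had, h0.symm, hbc, by rw [← e3]; exact h0.symm,
          hab, h1.symm, hcd.symm, by rw [Sym2.eq_swap, ← e1]; exact h1.symm,
          hac, h2.symm, hbd.symm, by rw [Sym2.eq_swap, ← e2]; exact h2.symm⟩
      · -- c1 = col ac, c2 = col ab : tuple (a,d,c,b)
        have h2 : c2 = col s(a, b) := by
          rcases hc2 with h2 | h2 | h2
          · exact h2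
          · exact absurd (h1.trans h2.symm) h12
          · exact absurd (h0.trans h2.symm) h02
        refine fiber_four Γ col ?_ setdc
        exact ⟨had, h0.symm, hbc.symm, by rw [Sym2.eq_swap, ← e3]; exact h0.symm,
          hac, h1.symm, hbd.symm, by rw [Sym2.eq_swap, ← e2]; exact h1.symm,
          hab, h2.symm, hcd.symm, by rw [Sym2.eq_swap, ← e1]; exact h2.symm⟩
      · exact absurd (h0.trans h1.symm) h01
  calc 4 * (properK4s Γ col).card = ∑ _s ∈ properK4s Γ col, 4 := by
        rw [Finset.sum_const, smul_eq_mul, mul_comm]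
    _ ≤ _ := Finset.sum_le_sum hbig


private lemma mem_Dx {c1 c2 : Fin 3} {u v y : V} :
    y ∈ Dx Γ col c1 c2 u v ↔
      Γ.Adj u y ∧ col s(u, y) = c2 ∧ Γ.Adj v y ∧ col s(v, y) = c1 := by
  rw [Dx, Finset.mem_filter]
  simp only [Finset.mem_univ, true_and]

/-- The condition that an ordered pair forms a `c0`-colored edge. -/
private def C0 (c0 : Fin 3) (p : V × V) : Prop := Γ.Adj p.1 p.2 ∧ col s(p.1, p.2) = c0

private lemma pset_le_sum (c0 c1 c2 : Fin 3) :
    (Pset Γ col c0 c1 c2).card ≤ ∑ p : V × V, (if C0 Γ col c0 p then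
      (Dx Γ col c1 c2 p.2 p.1).card * (Dx Γ col c1 c2 p.1 p.2).card else 0) := by
  have hmem : ∀ t ∈ Pset Γ col c0 c1 c2, ((t.1, t.2.1) : V × V) ∈ (Finset.univ : Finset (V × V)) :=
    fun t _ => Finset.mem_univ _
  rw [Finset.card_eq_sum_card_fiberwise hmem]
  apply Finset.sum_le_sum
  intro p _
  by_cases hp : C0 Γ col c0 p
  · rw [if_pos hp, ← Finset.card_product]
    apply Finset.card_le_card_of_injOn (fun t => (t.2.2.1, t.2.2.2))
    · intro t ht
      rw [Finset.mem_coe, Finset.mem_filter, Pset, Finset.mem_filter] at ht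
      obtain ⟨⟨-, huv, cuv, hwx, cwx, huw, cuw, hvx, cvx, hux, cux, hvw, cvw⟩, hfib⟩ := ht
      have h1 : t.1 = p.1 := congrArg Prod.fst hfib
      have h2 : t.2.1 = p.2 := congrArg Prod.snd hfib
      rw [Finset.mem_coe, Finset.mem_product]
      constructor
      · rw [mem_Dx]
        exact ⟨h2 ▸ hvw, h2 ▸ cvw, h1 ▸ huw, h1 ▸ cuw⟩
      · rw [mem_Dx]
        exact ⟨h1 ▸ hux, h1 ▸ cux, h2 ▸ hvx, h2 ▸ cvx⟩
    · intro t ht t' ht' heq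
      rw [Finset.mem_coe, Finset.mem_filter] at ht ht'
      have h1 : t.1 = p.1 := congrArg Prod.fst ht.2
      have h2 : t.2.1 = p.2 := congrArg Prod.snd ht.2
      have h1' : t'.1 = p.1 := congrArg Prod.fst ht'.2
      have h2' : t'.2.1 = p.2 := congrArg Prod.snd ht'.2
      have h3 : t.2.2.1 = t'.2.2.1 := congrArg Prod.fst heq
      have h4 : t.2.2.2 = t'.2.2.2 := congrArg Prod.snd heq
      obtain ⟨ta, tb, tc, td⟩ := t
      obtain ⟨ta', tb', tc', td'⟩ := t'
      simp only at h1 h2 h3 h4 h1' h2'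
      simp [h1, h2, h3, h4, h1', h2']
  · rw [if_neg hp]
    rw [Nat.le_zero, Finset.card_eq_zero]
    apply Finset.eq_empty_of_forall_notMem
    intro t ht
    rw [Finset.mem_filter, Pset, Finset.mem_filter] at ht
    obtain ⟨⟨-, huv, cuv, -⟩, hfib⟩ := ht
    have h1 : t.1 = p.1 := congrArg Prod.fst hfib
    have h2 : t.2.1 = p.2 := congrArg Prod.snd hfib
    exact hp ⟨h1 ▸ h2 ▸ huv, h1 ▸ h2 ▸ cuv⟩

private lemma C0_swap (c0 : Fin 3) (p : V × V) : C0 Γ col c0 p.swap ↔ C0 Γ col c0 p := by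
  unfold C0
  constructor
  · rintro ⟨h1, h2⟩; exact ⟨h1.symm, by rw [Sym2.eq_swap]; exact h2⟩
  · rintro ⟨h1, h2⟩; exact ⟨h1.symm, by rw [Sym2.eq_swap]; exact h2⟩

private lemma sum_symmetrize (c0 c1 c2 : Fin 3) :
    ∑ p : V × V, (if C0 Γ col c0 p then
      (Dx Γ col c1 c2 p.2 p.1).card * (Dx Γ col c1 c2 p.1 p.2).card else 0) ≤
    ∑ p : V × V, (if C0 Γ col c0 p then
      (Dx Γ col c1 c2 p.1 p.2).card * (Dx Γ col c1 c2 p.1 p.2).card else 0) := by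
  set F := fun p : V × V => (if C0 Γ col c0 p then
      (Dx Γ col c1 c2 p.2 p.1).card * (Dx Γ col c1 c2 p.1 p.2).card else 0) with hF
  set G := fun p : V × V => (if C0 Γ col c0 p then
      (Dx Γ col c1 c2 p.1 p.2).card * (Dx Γ col c1 c2 p.1 p.2).card else 0) with hG
  have key : ∀ p : V × V, 2 * F p ≤ G p + G p.swap := by
    intro p
    by_cases hp : C0 Γ col c0 p
    · have hps : C0 Γ col c0 p.swap := (C0_swap Γ col c0 p).mpr hp
      rw [hF, hG]
      simp only [if_pos hp, if_pos hps]
      have : ∀ a b : ℕ, 2 * (a * b) ≤ b * b + a * a := by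
        intro a b
        nlinarith [sq_nonneg ((a : ℤ) - b), sq_nonneg ((a : ℤ) + b)]
      exact this _ _
    · have hps : ¬ C0 Γ col c0 p.swap := fun h => hp ((C0_swap Γ col c0 p).mp h)
      rw [hF, hG]
      simp [if_neg hp, if_neg hps]
  have hswap : ∑ p : V × V, G p.swap = ∑ p : V × V, G p := by
    apply Fintype.sum_equiv (Equiv.prodComm V V)
    intro p
    rfl
  have h2 : 2 * ∑ p : V × V, F p ≤ 2 * ∑ p : V × V, G p := by
    calc 2 * ∑ p : V × V, F p = ∑ p : V × V, 2 * F p := by rw [Finset.mul_sum]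
      _ ≤ ∑ p : V × V, (G p + G p.swap) := Finset.sum_le_sum (fun p _ => key p)
      _ = (∑ p : V × V, G p) + ∑ p : V × V, G p.swap := Finset.sum_add_distrib
      _ = 2 * ∑ p : V × V, G p := by rw [hswap]; ring
  exact Nat.le_of_mul_le_mul_left h2 (by norm_num)

private lemma sum_le_Sgen (c0 c1 c2 : Fin 3) :
    ∑ p : V × V, (if C0 Γ col c0 p then
      (Dx Γ col c1 c2 p.1 p.2).card * (Dx Γ col c1 c2 p.1 p.2).card else 0) ≤
    (Sgen Γ col c0 c1 c2).card := by
  have hmem : ∀ t ∈ Sgen Γ col c0 c1 c2, ((t.1, t.2.1) : V × V) ∈ (Finset.univ : Finset (V × V)) :=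
    fun t _ => Finset.mem_univ _
  rw [Finset.card_eq_sum_card_fiberwise hmem]
  apply Finset.sum_le_sum
  intro p _
  by_cases hp : C0 Γ col c0 p
  · rw [if_pos hp, ← Finset.card_product]
    apply Finset.card_le_card_of_injOn (fun q => (p.1, p.2, q.1, q.2))
    · intro q hq
      rw [Finset.mem_coe, Finset.mem_product] at hq
      rw [Finset.mem_coe, Finset.mem_filter, Sgen, Finset.mem_filter]
      exact ⟨⟨Finset.mem_univ _, hp.1, hp.2, hq.1, hq.2⟩, rfl⟩
    · intro q hq q' hq' heq
      have h1 : q.1 = q'.1 := congrArg (fun t : V × V × V × V => t.2.2.1) heq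
      have h2 : q.2 = q'.2 := congrArg (fun t : V × V × V × V => t.2.2.2) heq
      exact Prod.ext h1 h2
  · rw [if_neg hp]
    exact Nat.zero_le _

private lemma Sgen_le (c0 c1 c2 : Fin 3) (h01 : c0 ≠ c1) (h02 : c0 ≠ c2) (h12 : c1 ≠ c2) :
    (Sgen Γ col c0 c1 c2).card ≤
      (colorEdges Γ col c1).card * (colorEdges Γ col c2).card := by
  rw [← Finset.card_product]
  apply Finset.card_le_card_of_injOn
    (fun t => (s(t.2.1, t.2.2.1), s(t.1, t.2.2.2)))
  · intro t ht
    rw [Finset.mem_coe, Sgen, Finset.mem_filter] at ht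
    obtain ⟨-, huv, cuv, hx, hy⟩ := ht
    rw [mem_Dx] at hx hy
    rw [Finset.mem_coe, Finset.mem_product]
    constructor
    · rw [colorEdges, Finset.mem_filter]
      exact ⟨Finset.mem_univ _, Γ.mem_edgeSet.mpr hx.2.2.1, hx.2.2.2⟩
    · rw [colorEdges, Finset.mem_filter]
      exact ⟨Finset.mem_univ _, Γ.mem_edgeSet.mpr hy.1, hy.2.1⟩
  · intro t ht t' ht' heq
    rw [Finset.mem_coe, Sgen, Finset.mem_filter] at ht ht'
    obtain ⟨-, huv, cuv, hx, hy⟩ := ht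
    obtain ⟨-, huv', cuv', hx', hy'⟩ := ht'
    rw [mem_Dx] at hx hy hx' hy'
    obtain ⟨u, v, x, y⟩ := t
    obtain ⟨u', v', x', y'⟩ := t'
    simp only at huv cuv hx hy huv' cuv' hx' hy'
    have e1 : s(v, x) = s(v', x') := congrArg Prod.fst heq
    have e2 : s(u, y) = s(u', y') := congrArg Prod.snd heq
    rw [Sym2.eq_iff] at e1 e2
    rcases e1 with ⟨hv, hx2⟩ | ⟨hv, hx2⟩
    · rcases e2 with ⟨hu, hy2⟩ | ⟨hu, hy2⟩
      · simp [hv, hx2, hu, hy2]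
      · -- u = y', y = u' : color clash c0 vs c1 on edge (v, y)
        exfalso
        subst hv hx2
        have : col s(u', v) = c0 := cuv'
        rw [← hy2] at this
        rw [Sym2.eq_swap] at this
        have hc : col s(v, y) = c1 := hy.2.2.2
        rw [this] at hc
        exact h01 hc
    · rcases e2 with ⟨hu, hy2⟩ | ⟨hu, hy2⟩
      · -- v = x', x = v' : color clash c0 vs c2 on edge (u, x)
        exfalso
        subst hu
        have : col s(u, v') = c0 := cuv'
        rw [← hx2] at this
        have hc : col s(u, x) = c2 := hx.2.1
        rw [this] at hc
        exact h02 hc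
      · -- both flipped : c2 vs c1 clash on edge (y, v)
        exfalso
        have : col s(u', x') = c2 := hx'.2.1
        rw [← hy2, ← hv] at this
        rw [Sym2.eq_swap] at this
        have hc : col s(v, y) = c1 := hy.2.2.2
        rw [this] at hc
        exact h12 hc.symm

/-- Master bound: the number of pattern tuples is at most `E(c1) * E(c2)`. -/
lemma Pset_le (c0 c1 c2 : Fin 3) (h01 : c0 ≠ c1) (h02 : c0 ≠ c2) (h12 : c1 ≠ c2) :
    (Pset Γ col c0 c1 c2).card ≤
      (colorEdges Γ col c1).card * (colorEdges Γ col c2).card :=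
  le_trans (pset_le_sum Γ col c0 c1 c2) (le_trans (sum_symmetrize Γ col c0 c1 c2)
    (le_trans (sum_le_Sgen Γ col c0 c1 c2) (Sgen_le Γ col c0 c1 c2 h01 h02 h12)))

lemma four_K_le (c0 c1 c2 : Fin 3) (h01 : c0 ≠ c1) (h02 : c0 ≠ c2) (h12 : c1 ≠ c2) :
    4 * (properK4s Γ col).card ≤
      (colorEdges Γ col c1).card * (colorEdges Γ col c2).card :=
  le_trans (four_K_le_Pset Γ col c0 c1 c2 h01 h02 h12) (Pset_le Γ col c0 c1 c2 h01 h02 h12)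

end Key

/-- A 3-edge-colored graph with `R` red, `G` green, `B` blue edges and `K` properly
3-edge-colored copies of `K₄` satisfies `K ≤ (1/4)·(R·G·B)^(2/3)`. -/
theorem stmt2 (Γ : SimpleGraph V) (col : Sym2 V → Fin 3) (R G B K : ℕ)
    (hR : R = (colorEdges Γ col 0).card)
    (hG : G = (colorEdges Γ col 1).card)
    (hB : B = (colorEdges Γ col 2).card)
    (hK : K = (properK4s Γ col).card) :
    (K : ℝ) ≤ (1 / 4) * ((R : ℝ) * G * B) ^ ((2 : ℝ) / 3) := by
  have h1 : 4 * K ≤ G * B := by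
    rw [hK, hG, hB]
    exact four_K_le Γ col 0 1 2 (by decide) (by decide) (by decide)
  have h2 : 4 * K ≤ R * B := by
    rw [hK, hR, hB]
    exact four_K_le Γ col 1 0 2 (by decide) (by decide) (by decide)
  have h3 : 4 * K ≤ R * G := by
    rw [hK, hR, hG]
    exact four_K_le Γ col 2 0 1 (by decide) (by decide) (by decide)
  have hcube : (4 * K) ^ 3 ≤ (R * G * B) ^ 2 := by
    calc (4 * K) ^ 3 = (4 * K) * ((4 * K) * (4 * K)) := by ring
      _ ≤ (G * B) * ((R * B) * (R * G)) :=
          Nat.mul_le_mul h1 (Nat.mul_le_mul h2 h3)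
      _ = (R * G * B) ^ 2 := by ring
  have hx : (0 : ℝ) ≤ (R : ℝ) * G * B := by positivity
  have hy : (0 : ℝ) ≤ 4 * (K : ℝ) := by positivity
  have hcubeR : (4 * (K : ℝ)) ^ (3 : ℕ) ≤ ((R : ℝ) * G * B) ^ (2 : ℕ) := by
    exact_mod_cast hcube
  have hmain : 4 * (K : ℝ) ≤ ((R : ℝ) * G * B) ^ ((2 : ℝ) / 3) := by
    have step := Real.rpow_le_rpow (by positivity) hcubeR (by norm_num : (0:ℝ) ≤ 1/3)
    have lhs_eq : ((4 * (K : ℝ)) ^ (3 : ℕ)) ^ ((1 : ℝ)/3) = 4 * (K : ℝ) := by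
      rw [← Real.rpow_natCast (4 * (K : ℝ)) 3, ← Real.rpow_mul hy]
      norm_num
    have rhs_eq : (((R : ℝ) * G * B) ^ (2 : ℕ)) ^ ((1 : ℝ)/3)
        = ((R : ℝ) * G * B) ^ ((2 : ℝ) / 3) := by
      rw [← Real.rpow_natCast ((R : ℝ) * G * B) 2, ← Real.rpow_mul hx]
      norm_num
    rw [lhs_eq, rhs_eq] at step
    exact step
  linarith

end RainbowTri
end
end

section
/- Let Γ be a finite simple graph each of whose edges is colored red, green, or blue, with R red edges, G green edges, and B blue edges, and let K be the number of properly 3-edge-colored copies of K4 in Γ. If K = (1/4)·(R·G·B)^{2/3} and K > 0, then Γ is obtained from a balanced blowup of a properly 3-edge-colored K4 by possibly adding a set of isolated vertices. -/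
open scoped Classical

noncomputable section

namespace RainbowTri

variable {V : Type*} [Fintype V]

/-! ### Auxiliary machinery for the proof of `stmt3` -/

section Aux

variable (Γ : SimpleGraph V) (col : Sym2 V → Fin 3)

/-- Ordered pairs forming an edge of color `r`. -/
def APairs (r : Fin 3) : Finset (V × V) :=
  Finset.univ.filter fun p => Γ.Adj p.1 p.2 ∧ col s(p.1, p.2) = r

/-- Common neighbours: `b`-colored to `p.1`, `g`-colored to `p.2`. -/
def DPf (g b : Fin 3) (p : V × V) : Finset V :=
  Finset.univ.filter fun w =>
    Γ.Adj p.1 w ∧ col s(p.1, w) = b ∧ Γ.Adj p.2 w ∧ col s(p.2, w) = g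

/-- Common neighbours: `g`-colored to `p.1`, `b`-colored to `p.2`. -/
def DMf (g b : Fin 3) (p : V × V) : Finset V :=
  Finset.univ.filter fun w =>
    Γ.Adj p.1 w ∧ col s(p.1, w) = g ∧ Γ.Adj p.2 w ∧ col s(p.2, w) = b

/-- Pairs completing `p` to an ordered properly colored `K₄`. -/
def DKf (r g b : Fin 3) (p : V × V) : Finset (V × V) :=
  Finset.univ.filter fun q =>
    Γ.Adj q.1 q.2 ∧ col s(q.1, q.2) = r ∧
    Γ.Adj p.1 q.1 ∧ col s(p.1, q.1) = g ∧ Γ.Adj p.2 q.2 ∧ col s(p.2, q.2) = g ∧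
    Γ.Adj p.1 q.2 ∧ col s(p.1, q.2) = b ∧ Γ.Adj p.2 q.1 ∧ col s(p.2, q.1) = b

/-- Ordered properly colored `K₄`s with prescribed roles. -/
def OT (r g b : Fin 3) : Finset (V × V × V × V) :=
  Finset.univ.filter fun t =>
    Γ.Adj t.1 t.2.1 ∧ col s(t.1, t.2.1) = r ∧
    Γ.Adj t.2.2.1 t.2.2.2 ∧ col s(t.2.2.1, t.2.2.2) = r ∧
    Γ.Adj t.1 t.2.2.1 ∧ col s(t.1, t.2.2.1) = g ∧
    Γ.Adj t.2.1 t.2.2.2 ∧ col s(t.2.1, t.2.2.2) = g ∧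
    Γ.Adj t.1 t.2.2.2 ∧ col s(t.1, t.2.2.2) = b ∧
    Γ.Adj t.2.1 t.2.2.1 ∧ col s(t.2.1, t.2.2.1) = b

/-- Tuples `(u,v,x,y)` with `uv` of color `r`, `ux`, `uy` of color `b`,
`vx`, `vy` of color `g`. -/
def TU (r g b : Fin 3) : Finset (V × V × V × V) :=
  Finset.univ.filter fun t =>
    Γ.Adj t.1 t.2.1 ∧ col s(t.1, t.2.1) = r ∧
    Γ.Adj t.1 t.2.2.1 ∧ col s(t.1, t.2.2.1) = b ∧
    Γ.Adj t.1 t.2.2.2 ∧ col s(t.1, t.2.2.2) = b ∧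
    Γ.Adj t.2.1 t.2.2.1 ∧ col s(t.2.1, t.2.2.1) = g ∧
    Γ.Adj t.2.1 t.2.2.2 ∧ col s(t.2.1, t.2.2.2) = g

variable {Γ col}

lemma card_OT (r g b : Fin 3) :
    (OT Γ col r g b).card = ∑ p ∈ APairs Γ col r, (DKf Γ col r g b p).card := by
  rw [Finset.card_eq_sum_card_fiberwise (f := fun t : V × V × V × V => (t.1, t.2.1))
    (t := APairs Γ col r)]
  · refine Finset.sum_congr rfl fun p hp => ?_
    refine Finset.card_bij' (fun t _ => (t.2.2.1, t.2.2.2))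
      (fun q _ => (p.1, p.2, q.1, q.2)) ?_ ?_ ?_ ?_
    · intro t ht
      rw [Finset.mem_filter] at ht
      obtain ⟨htO, ht2⟩ := ht
      subst ht2
      simp only [OT, Finset.mem_filter, Finset.mem_univ, true_and] at htO
      simp only [DKf, Finset.mem_filter, Finset.mem_univ, true_and]
      tauto
    · intro q hq
      simp only [DKf, Finset.mem_filter, Finset.mem_univ, true_and] at hq
      have hp' := hp
      simp only [APairs, Finset.mem_filter, Finset.mem_univ, true_and] at hp'
      rw [Finset.mem_filter]
      refine ⟨?_, rfl⟩
      simp only [OT, Finset.mem_filter, Finset.mem_univ, true_and]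
      tauto
    · intro t ht
      rw [Finset.mem_filter] at ht
      obtain ⟨-, ht2⟩ := ht
      subst ht2
      rfl
    · intro q hq
      rfl
  · intro t ht
    simp only [OT, Finset.mem_coe, Finset.mem_filter, Finset.mem_univ, true_and] at ht
    simp only [APairs, Finset.mem_coe, Finset.mem_filter, Finset.mem_univ, true_and]
    exact ⟨ht.1, ht.2.1⟩

lemma card_TU (r g b : Fin 3) :
    (TU Γ col r g b).card = ∑ p ∈ APairs Γ col r, (DPf Γ col g b p).card ^ 2 := by
  rw [Finset.card_eq_sum_card_fiberwise (f := fun t : V × V × V × V => (t.1, t.2.1))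
    (t := APairs Γ col r)]
  · refine Finset.sum_congr rfl fun p hp => ?_
    rw [sq, ← Finset.card_product]
    refine Finset.card_bij' (fun t _ => (t.2.2.1, t.2.2.2))
      (fun q _ => (p.1, p.2, q.1, q.2)) ?_ ?_ ?_ ?_
    · intro t ht
      rw [Finset.mem_filter] at ht
      obtain ⟨htO, ht2⟩ := ht
      subst ht2
      simp only [TU, Finset.mem_filter, Finset.mem_univ, true_and] at htO
      simp only [DPf, Finset.mem_product, Finset.mem_filter, Finset.mem_univ, true_and]
      tauto
    · intro q hq
      simp only [DPf, Finset.mem_product, Finset.mem_filter, Finset.mem_univ,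
        true_and] at hq
      have hp' := hp
      simp only [APairs, Finset.mem_filter, Finset.mem_univ, true_and] at hp'
      rw [Finset.mem_filter]
      refine ⟨?_, rfl⟩
      simp only [TU, Finset.mem_filter, Finset.mem_univ, true_and]
      tauto
    · intro t ht
      rw [Finset.mem_filter] at ht
      obtain ⟨-, ht2⟩ := ht
      subst ht2
      rfl
    · intro q hq
      rfl
  · intro t ht
    simp only [TU, Finset.mem_coe, Finset.mem_filter, Finset.mem_univ, true_and] at ht
    simp only [APairs, Finset.mem_coe, Finset.mem_filter, Finset.mem_univ, true_and]
    exact ⟨ht.1, ht.2.1⟩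

lemma DKf_subset (r g b : Fin 3) (p : V × V) :
    DKf Γ col r g b p ⊆ (DMf Γ col g b p) ×ˢ (DPf Γ col g b p) := by
  intro q hq
  simp only [DKf, DMf, DPf, Finset.mem_filter, Finset.mem_univ, true_and,
    Finset.mem_product] at hq ⊢
  tauto

lemma card_DKf_le (r g b : Fin 3) (p : V × V) :
    (DKf Γ col r g b p).card ≤ (DMf Γ col g b p).card * (DPf Γ col g b p).card := by
  simpa [Finset.card_product] using Finset.card_le_card (DKf_subset (Γ := Γ) (col := col) r g b p)

lemma DMf_eq_DPf_swap (g b : Fin 3) (p : V × V) :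
    DMf Γ col g b p = DPf Γ col g b (p.2, p.1) := by
  unfold DMf DPf
  apply Finset.filter_congr
  intro w _
  dsimp only
  tauto

lemma APairs_swap_mem (r : Fin 3) {p : V × V} (hp : p ∈ APairs Γ col r) :
    (p.2, p.1) ∈ APairs Γ col r := by
  simp only [APairs, Finset.mem_filter, Finset.mem_univ, true_and] at hp ⊢
  refine ⟨hp.1.symm, ?_⟩
  rw [Sym2.eq_swap]
  exact hp.2

lemma sum_DMf_sq (r g b : Fin 3) :
    ∑ p ∈ APairs Γ col r, (DMf Γ col g b p).card ^ 2
      = ∑ p ∈ APairs Γ col r, (DPf Γ col g b p).card ^ 2 := by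
  refine Finset.sum_nbij' (fun p => (p.2, p.1)) (fun p => (p.2, p.1)) ?_ ?_ ?_ ?_ ?_
  · intro p hp; exact APairs_swap_mem r hp
  · intro p hp; exact APairs_swap_mem r hp
  · intro p _; rfl
  · intro p _; rfl
  · intro p _
    rw [DMf_eq_DPf_swap]

lemma twoDK_le (r g b : Fin 3) (p : V × V) :
    2 * (DKf Γ col r g b p).card
      ≤ (DMf Γ col g b p).card ^ 2 + (DPf Γ col g b p).card ^ 2 := by
  have h := card_DKf_le (Γ := Γ) (col := col) r g b p
  zify at h ⊢
  nlinarith [sq_nonneg (((DMf Γ col g b p).card : ℤ) - (DPf Γ col g b p).card)]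

lemma card_OT_le_card_TU (r g b : Fin 3) :
    (OT Γ col r g b).card ≤ (TU Γ col r g b).card := by
  rw [card_OT, card_TU]
  have h1 : ∑ p ∈ APairs Γ col r, 2 * (DKf Γ col r g b p).card
      ≤ ∑ p ∈ APairs Γ col r,
          ((DMf Γ col g b p).card ^ 2 + (DPf Γ col g b p).card ^ 2) :=
    Finset.sum_le_sum fun p _ => twoDK_le r g b p
  rw [Finset.sum_add_distrib, sum_DMf_sq, ← Finset.mul_sum] at h1
  omega

end Aux

section Aux2

variable {Γ : SimpleGraph V} {col : Sym2 V → Fin 3}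

lemma TU_maps (r g b : Fin 3) :
    ∀ t ∈ TU Γ col r g b,
      (s(t.1, t.2.2.2), s(t.2.1, t.2.2.1))
        ∈ (colorEdges Γ col b) ×ˢ (colorEdges Γ col g) := by
  intro t ht
  simp only [TU, Finset.mem_filter, Finset.mem_univ, true_and] at ht
  obtain ⟨h1, h2, h3, h4, h5, h6, h7, h8, h9, h10⟩ := ht
  simp only [Finset.mem_product, colorEdges, Finset.mem_filter, Finset.mem_univ, true_and,
    SimpleGraph.mem_edgeSet]
  exact ⟨⟨h5, h6⟩, ⟨h7, h8⟩⟩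

lemma TU_injOn (r g b : Fin 3) (hrg : r ≠ g) (hrb : r ≠ b) (hgb : g ≠ b) :
    Set.InjOn (fun t : V × V × V × V => (s(t.1, t.2.2.2), s(t.2.1, t.2.2.1)))
      (TU Γ col r g b : Set (V × V × V × V)) := by
  rintro ⟨u, v, x, y⟩ ht ⟨u', v', x', y'⟩ ht' heq
  simp only [Finset.coe_filter, TU, Set.mem_setOf_eq, Finset.mem_filter, Finset.mem_univ,
    true_and] at ht ht'
  obtain ⟨h1, h2, h3, h4, h5, h6, h7, h8, h9, h10⟩ := ht
  obtain ⟨h1', h2', h3', h4', h5', h6', h7', h8', h9', h10'⟩ := ht'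
  simp only [Prod.mk.injEq] at heq ⊢
  obtain ⟨e1, e2⟩ := heq
  rw [Sym2.eq_iff] at e1 e2
  rcases e1 with ⟨rfl, rfl⟩ | ⟨rfl, rfl⟩ <;> rcases e2 with ⟨rfl, rfl⟩ | ⟨rfl, rfl⟩
  · exact ⟨rfl, rfl, rfl, rfl⟩
  · -- u'=u, y'=y, v'=x, x'=v : edge (u,x) has color r (from t') and b (from t)
    exfalso; exact hrb (h2'.symm.trans h4)
  · -- u'=y, y'=u, v'=v, x'=x : edge (y,v) has color r (t') and g (t)
    exfalso
    apply hrg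
    rw [← h2', Sym2.eq_swap, h10]
  · -- u'=y, y'=u, v'=x, x'=v : edge (y,v) has color b (t', as u'x'=(y,v)) and g (t)
    exfalso
    apply hgb
    rw [← h4', Sym2.eq_swap, h10]

lemma card_TU_le (r g b : Fin 3) (hrg : r ≠ g) (hrb : r ≠ b) (hgb : g ≠ b) :
    (TU Γ col r g b).card ≤ (colorEdges Γ col b).card * (colorEdges Γ col g).card := by
  rw [← Finset.card_product]
  exact Finset.card_le_card_of_injOn _ (TU_maps r g b) (TU_injOn r g b hrg hrb hgb)

lemma TU_surj (r g b : Fin 3) (hrg : r ≠ g) (hrb : r ≠ b) (hgb : g ≠ b)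
    (h : (TU Γ col r g b).card
        = (colorEdges Γ col b).card * (colorEdges Γ col g).card) :
    ∀ e ∈ colorEdges Γ col b, ∀ f ∈ colorEdges Γ col g,
      ∃ t ∈ TU Γ col r g b, s(t.1, t.2.2.2) = e ∧ s(t.2.1, t.2.2.1) = f := by
  intro e he f hf
  set φ := fun t : V × V × V × V => (s(t.1, t.2.2.2), s(t.2.1, t.2.2.1)) with hφ
  have himg : (TU Γ col r g b).image φ = (colorEdges Γ col b) ×ˢ (colorEdges Γ col g) := by
    apply Finset.eq_of_subset_of_card_le
    · intro z hz
      rw [Finset.mem_image] at hz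
      obtain ⟨t, ht, rfl⟩ := hz
      exact TU_maps r g b t ht
    · rw [Finset.card_product, Finset.card_image_of_injOn (TU_injOn r g b hrg hrb hgb), h]
  have : (e, f) ∈ (TU Γ col r g b).image φ := by
    rw [himg, Finset.mem_product]; exact ⟨he, hf⟩
  rw [Finset.mem_image] at this
  obtain ⟨t, ht, hteq⟩ := this
  rw [hφ, Prod.mk.injEq] at hteq
  exact ⟨t, ht, hteq.1, hteq.2⟩

lemma Reg_of_eq (r g b : Fin 3)
    (h : (OT Γ col r g b).card = (TU Γ col r g b).card) :
    ∀ p ∈ APairs Γ col r, (DMf Γ col g b p).card = (DPf Γ col g b p).card := by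
  have hsum : ∑ p ∈ APairs Γ col r, 2 * (DKf Γ col r g b p).card
      = ∑ p ∈ APairs Γ col r,
          ((DMf Γ col g b p).card ^ 2 + (DPf Γ col g b p).card ^ 2) := by
    have h1 : ∑ p ∈ APairs Γ col r, 2 * (DKf Γ col r g b p).card
        ≤ ∑ p ∈ APairs Γ col r,
            ((DMf Γ col g b p).card ^ 2 + (DPf Γ col g b p).card ^ 2) :=
      Finset.sum_le_sum fun p _ => twoDK_le r g b p
    have h2 : ∑ p ∈ APairs Γ col r,
          ((DMf Γ col g b p).card ^ 2 + (DPf Γ col g b p).card ^ 2)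
        = 2 * ∑ p ∈ APairs Γ col r, (DKf Γ col r g b p).card := by
      rw [Finset.sum_add_distrib, sum_DMf_sq, ← card_TU, ← h, card_OT]
      omega
    rw [Finset.mul_sum] at h2
    omega
  intro p hp
  have hpt := (Finset.sum_eq_sum_iff_of_le
    (fun p _ => twoDK_le (Γ := Γ) (col := col) r g b p)).mp hsum p hp
  have hle := card_DKf_le (Γ := Γ) (col := col) r g b p
  zify at hpt hle ⊢
  nlinarith [sq_nonneg (((DMf Γ col g b p).card : ℤ) - (DPf Γ col g b p).card)]

end Aux2
section Aux3

variable {Γ : SimpleGraph V} {col : Sym2 V → Fin 3}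

lemma fin3_cover : ∀ (c1 c2 c3 : Fin 3), c1 ≠ c2 → c1 ≠ c3 → c2 ≠ c3 →
    ∀ x : Fin 3, x = c1 ∨ x = c2 ∨ x = c3 := by decide

lemma col_swap (col : Sym2 V → Fin 3) (x y : V) : col s(x, y) = col s(y, x) := by
  rw [Sym2.eq_swap]

lemma OT_maps (r g b : Fin 3) (hrg : r ≠ g) (hrb : r ≠ b) (hgb : g ≠ b) :
    ∀ t ∈ OT Γ col r g b,
      ({t.1, t.2.1, t.2.2.1, t.2.2.2} : Finset V) ∈ properK4s Γ col := by
  intro t ht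
  simp only [OT, Finset.mem_filter, Finset.mem_univ, true_and] at ht
  obtain ⟨h1, h2, h3, h4, h5, h6, h7, h8, h9, h10, h11, h12⟩ := ht
  simp only [properK4s, Finset.mem_filter, Finset.mem_univ, true_and]
  refine ⟨t.1, t.2.1, t.2.2.1, t.2.2.2, rfl, h1, h5, h9, h11, h7, h3, ?_, ?_, ?_, ?_, ?_, ?_⟩
  · rw [h2, h4]
  · rw [h6, h8]
  · rw [h10, h12]
  · rw [h2, h6]; exact hrg
  · rw [h2, h10]; exact hrb
  · rw [h6, h10]; exact hgb

lemma four_le_fiber {r g b : Fin 3} {a b' c d : V} {s : Finset V}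
    (hab : Γ.Adj a b') (hac : Γ.Adj a c) (had : Γ.Adj a d)
    (hbc : Γ.Adj b' c) (hbd : Γ.Adj b' d) (hcd : Γ.Adj c d)
    (e1 : col s(a, b') = r) (e2 : col s(c, d) = r)
    (e3 : col s(a, c) = g) (e4 : col s(b', d) = g)
    (e5 : col s(a, d) = b) (e6 : col s(b', c) = b)
    (hs : s = {a, b', c, d}) :
    4 ≤ ((OT Γ col r g b).filter
      (fun t => ({t.1, t.2.1, t.2.2.1, t.2.2.2} : Finset V) = s)).card := by
  have hne1 : a ≠ b' := hab.ne
  have hne2 : a ≠ c := hac.ne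
  have hne3 : a ≠ d := had.ne
  have hne4 : b' ≠ c := hbc.ne
  have hne5 : b' ≠ d := hbd.ne
  have hne6 : c ≠ d := hcd.ne
  have hsub : ({(a, b', c, d), (b', a, d, c), (c, d, a, b'), (d, c, b', a)} :
      Finset (V × V × V × V)) ⊆ (OT Γ col r g b).filter
        (fun t => ({t.1, t.2.1, t.2.2.1, t.2.2.2} : Finset V) = s) := by
    intro t ht
    simp only [Finset.mem_insert, Finset.mem_singleton] at ht
    rw [Finset.mem_filter]
    rcases ht with rfl | rfl | rfl | rfl
    · constructor
      · simp only [OT, Finset.mem_filter, Finset.mem_univ, true_and]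
        exact ⟨hab, e1, hcd, e2, hac, e3, hbd, e4, had, e5, hbc, e6⟩
      · rw [hs]
    · constructor
      · simp only [OT, Finset.mem_filter, Finset.mem_univ, true_and]
        refine ⟨hab.symm, ?_, hcd.symm, ?_, hbd, e4, hac, e3, hbc, e6, had, e5⟩
        · rw [← col_swap col a b']; exact e1
        · rw [← col_swap col c d]; exact e2
      · rw [hs]; ext z; simp only [Finset.mem_insert, Finset.mem_singleton]; tauto
    · constructor
      · simp only [OT, Finset.mem_filter, Finset.mem_univ, true_and]
        refine ⟨hcd, e2, hab, e1, ?_, ?_, hbd.symm, ?_, hbc.symm, ?_, had.symm, ?_⟩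
        · exact hac.symm
        · rw [← col_swap col a c]; exact e3
        · rw [← col_swap col b' d]; exact e4
        · rw [← col_swap col b' c]; exact e6
        · rw [← col_swap col a d]; exact e5
      · rw [hs]; ext z; simp only [Finset.mem_insert, Finset.mem_singleton]; tauto
    · constructor
      · simp only [OT, Finset.mem_filter, Finset.mem_univ, true_and]
        refine ⟨hcd.symm, ?_, hab.symm, ?_, hbd.symm, ?_, hac.symm, ?_, had.symm, ?_,
          hbc.symm, ?_⟩
        · rw [← col_swap col c d]; exact e2
        · rw [← col_swap col a b']; exact e1
        · rw [← col_swap col b' d]; exact e4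
        · rw [← col_swap col a c]; exact e3
        · rw [← col_swap col a d]; exact e5
        · rw [← col_swap col b' c]; exact e6
      · rw [hs]; ext z; simp only [Finset.mem_insert, Finset.mem_singleton]; tauto
  have hcard : ({(a, b', c, d), (b', a, d, c), (c, d, a, b'), (d, c, b', a)} :
      Finset (V × V × V × V)).card = 4 := by
    rw [Finset.card_insert_of_notMem, Finset.card_insert_of_notMem,
      Finset.card_insert_of_notMem, Finset.card_singleton]
    · simp only [Finset.mem_singleton, Prod.mk.injEq, not_and]
      intro h; exact absurd h hne6
    · simp only [Finset.mem_insert, Finset.mem_singleton, Prod.mk.injEq, not_or, not_and]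
      constructor
      · intro h; exact absurd h hne4
      · intro h; exact absurd h hne5
    · simp only [Finset.mem_insert, Finset.mem_singleton, Prod.mk.injEq, not_or, not_and]
      refine ⟨fun h => absurd h hne1, fun h => absurd h hne2, fun h => absurd h hne3⟩
  calc (4 : ℕ) = _ := hcard.symm
    _ ≤ _ := Finset.card_le_card hsub

lemma fourK_le_OT (r g b : Fin 3) (hrg : r ≠ g) (hrb : r ≠ b) (hgb : g ≠ b) :
    4 * (properK4s Γ col).card ≤ (OT Γ col r g b).card := by
  rw [Finset.card_eq_sum_card_fiberwise
    (f := fun t : V × V × V × V => ({t.1, t.2.1, t.2.2.1, t.2.2.2} : Finset V))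
    (t := properK4s Γ col) (OT_maps r g b hrg hrb hgb)]
  rw [mul_comm, ← smul_eq_mul, ← Finset.sum_const]
  apply Finset.sum_le_sum
  intro s hs
  simp only [properK4s, Finset.mem_filter, Finset.mem_univ, true_and] at hs
  obtain ⟨a, b', c, d, hseq, hab, hac, had, hbc, hbd, hcd, q1, q2, q3, n1, n2, n3⟩ := hs
  have cover := fin3_cover (col s(a, b')) (col s(a, c)) (col s(a, d)) n1 n2 n3
  have setq : ∀ (p q u v : V), ({p, q, u, v} : Finset V) = {a, b', c, d} →
      s = {p, q, u, v} := fun p q u v h => by rw [hseq, ← h]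
  rcases cover r with hr | hr | hr <;> rcases cover g with hg | hg | hg
  · exact absurd (hr.trans hg.symm) hrg
  · -- r = ab, g = ac, b = ad : identity labeling
    have hb : b = col s(a, d) := by
      rcases cover b with hb | hb | hb
      · exact absurd (hr.trans hb.symm) hrb
      · exact absurd (hg.trans hb.symm) hgb
      · exact hb
    have f2 : col s(c, d) = r := by rw [← q1, ← hr]
    have f4 : col s(b', d) = g := by rw [← q2, ← hg]
    have f6 : col s(b', c) = b := by rw [← q3, ← hb]
    exact four_le_fiber hab hac had hbc hbd hcd hr.symm f2 hg.symm f4 hb.symm f6 hseq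
  · -- r = ab, g = ad, b = ac : labeling (a, b', d, c)
    have hb : b = col s(a, c) := by
      rcases cover b with hb | hb | hb
      · exact absurd (hr.trans hb.symm) hrb
      · exact hb
      · exact absurd (hg.trans hb.symm) hgb
    have f2 : col s(d, c) = r := by rw [col_swap col d c, ← q1, ← hr]
    have f4 : col s(b', c) = g := by rw [← q3, ← hg]
    have f6 : col s(b', d) = b := by rw [← q2, ← hb]
    refine four_le_fiber hab had hac hbd hbc hcd.symm hr.symm f2 hg.symm f4 hb.symm f6
      (setq _ _ _ _ ?_)
    ext z; simp only [Finset.mem_insert, Finset.mem_singleton]; tauto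
  · -- r = ac, g = ab, b = ad : labeling (a, c, b', d)
    have hb : b = col s(a, d) := by
      rcases cover b with hb | hb | hb
      · exact absurd (hg.trans hb.symm) hgb
      · exact absurd (hr.trans hb.symm) hrb
      · exact hb
    have f2 : col s(b', d) = r := by rw [← q2, ← hr]
    have f4 : col s(c, d) = g := by rw [← q1, ← hg]
    have f6 : col s(c, b') = b := by rw [col_swap col c b', ← q3, ← hb]
    refine four_le_fiber hac hab had hbc.symm hcd hbd hr.symm f2 hg.symm f4 hb.symm f6
      (setq _ _ _ _ ?_)
    ext z; simp only [Finset.mem_insert, Finset.mem_singleton]; tauto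
  · exact absurd (hr.trans hg.symm) hrg
  · -- r = ac, g = ad, b = ab : labeling (a, c, d, b')
    have hb : b = col s(a, b') := by
      rcases cover b with hb | hb | hb
      · exact hb
      · exact absurd (hr.trans hb.symm) hrb
      · exact absurd (hg.trans hb.symm) hgb
    have f2 : col s(d, b') = r := by rw [col_swap col d b', ← q2, ← hr]
    have f4 : col s(c, b') = g := by rw [col_swap col c b', ← q3, ← hg]
    have f6 : col s(c, d) = b := by rw [← q1, ← hb]
    refine four_le_fiber hac had hab hcd hbc.symm hbd.symm hr.symm f2 hg.symm f4 hb.symm f6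
      (setq _ _ _ _ ?_)
    ext z; simp only [Finset.mem_insert, Finset.mem_singleton]; tauto
  · -- r = ad, g = ab, b = ac : labeling (a, d, b', c)
    have hb : b = col s(a, c) := by
      rcases cover b with hb | hb | hb
      · exact absurd (hg.trans hb.symm) hgb
      · exact hb
      · exact absurd (hr.trans hb.symm) hrb
    have f2 : col s(b', c) = r := by rw [← q3, ← hr]
    have f4 : col s(d, c) = g := by rw [col_swap col d c, ← q1, ← hg]
    have f6 : col s(d, b') = b := by rw [col_swap col d b', ← q2, ← hb]
    refine four_le_fiber had hab hac hbd.symm hcd.symm hbc hr.symm f2 hg.symm f4 hb.symm f6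
      (setq _ _ _ _ ?_)
    ext z; simp only [Finset.mem_insert, Finset.mem_singleton]; tauto
  · -- r = ad, g = ac, b = ab : labeling (a, d, c, b')
    have hb : b = col s(a, b') := by
      rcases cover b with hb | hb | hb
      · exact hb
      · exact absurd (hg.trans hb.symm) hgb
      · exact absurd (hr.trans hb.symm) hrb
    have f2 : col s(c, b') = r := by rw [col_swap col c b', ← q3, ← hr]
    have f4 : col s(d, b') = g := by rw [col_swap col d b', ← q2, ← hg]
    have f6 : col s(d, c) = b := by rw [col_swap col d c, ← q1, ← hb]
    refine four_le_fiber had hac hab hcd.symm hbd.symm hbc.symm hr.symm f2 hg.symm f4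
      hb.symm f6 (setq _ _ _ _ ?_)
    ext z; simp only [Finset.mem_insert, Finset.mem_singleton]; tauto
  · exact absurd (hr.trans hg.symm) hrg

end Aux3
section Aux4

variable {Γ : SimpleGraph V} {col : Sym2 V → Fin 3}

/-- The key "combination" property extracted from tightness: every `b`-colored edge and
every `g`-colored edge can be oriented so as to be joined by an `r`-colored edge forming
the corresponding tuple. -/
def Comb (Γ : SimpleGraph V) (col : Sym2 V → Fin 3) : Prop :=
  ∀ r g b : Fin 3, r ≠ g → r ≠ b → g ≠ b →
    ∀ p1 q1 p2 q2 : V, Γ.Adj p1 q1 → col s(p1, q1) = b → Γ.Adj p2 q2 →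
      col s(p2, q2) = g →
      ∃ u v x y : V,
        (u = p1 ∧ y = q1 ∨ u = q1 ∧ y = p1) ∧ (v = p2 ∧ x = q2 ∨ v = q2 ∧ x = p2) ∧
        Γ.Adj u v ∧ col s(u, v) = r ∧ Γ.Adj u x ∧ col s(u, x) = b ∧
        Γ.Adj v y ∧ col s(v, y) = g

lemma comb_of_surj
    (hsurj : ∀ r g b : Fin 3, r ≠ g → r ≠ b → g ≠ b →
      ∀ e ∈ colorEdges Γ col b, ∀ f ∈ colorEdges Γ col g,
        ∃ t ∈ TU Γ col r g b, s(t.1, t.2.2.2) = e ∧ s(t.2.1, t.2.2.1) = f) :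
    Comb Γ col := by
  intro r g b hrg hrb hgb p1 q1 p2 q2 h1 h2 h3 h4
  have he : s(p1, q1) ∈ colorEdges Γ col b := by
    simp only [colorEdges, Finset.mem_filter, Finset.mem_univ, true_and,
      SimpleGraph.mem_edgeSet]
    exact ⟨h1, h2⟩
  have hf : s(p2, q2) ∈ colorEdges Γ col g := by
    simp only [colorEdges, Finset.mem_filter, Finset.mem_univ, true_and,
      SimpleGraph.mem_edgeSet]
    exact ⟨h3, h4⟩
  obtain ⟨t, ht, hte, htf⟩ := hsurj r g b hrg hrb hgb _ he _ hf
  simp only [TU, Finset.mem_filter, Finset.mem_univ, true_and] at ht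
  obtain ⟨a1, a2, a3, a4, a5, a6, a7, a8, a9, a10⟩ := ht
  rw [Sym2.eq_iff] at hte htf
  refine ⟨t.1, t.2.1, t.2.2.1, t.2.2.2, ?_, ?_, a1, a2, a3, a4, a9, a10⟩
  · tauto
  · tauto

lemma fin3_third : ∀ x y : Fin 3, x ≠ y → ∃ τ : Fin 3, τ ≠ x ∧ τ ≠ y := by decide

lemma fin3_two_others : ∀ τ : Fin 3, ∃ τ' τ'' : Fin 3, τ' ≠ τ ∧ τ'' ≠ τ ∧ τ'' ≠ τ' := by
  decide

/-- No triangle has exactly two edges of the same color. -/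
lemma lemW (hc : Comb Γ col) {p q z : V} (hpq : Γ.Adj p q) (hzp : Γ.Adj z p)
    (hzq : Γ.Adj z q) (hcc : col s(z, p) = col s(z, q)) :
    col s(z, p) = col s(p, q) := by
  by_contra hne
  obtain ⟨τ, hτχ, hτψ⟩ := fin3_third (col s(z, p)) (col s(p, q)) hne
  obtain ⟨u, v, x, y, hu, hv, huv, hcuv, -, -, -, -⟩ :=
    hc τ (col s(p, q)) (col s(z, p)) hτψ hτχ (Ne.symm hne) z p p q hzp rfl hpq rfl
  rcases hu with ⟨rfl, rfl⟩ | ⟨rfl, rfl⟩ <;> rcases hv with ⟨rfl, rfl⟩ | ⟨rfl, rfl⟩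
  · exact hτχ (hcuv ▸ rfl)
  · exact hτχ (by rw [← hcuv, ← hcc])
  · exact Γ.irrefl huv
  · exact hτψ (hcuv ▸ rfl)

/-- A non-isolated vertex has, for every color `τ`, an incident edge of color `≠ τ`. -/
lemma exists_ne_color (hc : Comb Γ col)
    (hcE : ∀ c : Fin 3, (colorEdges Γ col c).Nonempty) {v w : V} (hvw : Γ.Adj v w)
    (τ : Fin 3) : ∃ z, Γ.Adj v z ∧ col s(v, z) ≠ τ := by
  by_cases hx : col s(v, w) = τ
  · obtain ⟨τ', τ'', h1, h2, h3⟩ := fin3_two_others τ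
    obtain ⟨f, hf⟩ := hcE τ'
    obtain ⟨⟨p2, q2⟩, rfl⟩ := f.exists_rep
    simp only [colorEdges, Finset.mem_filter, Finset.mem_univ, true_and,
      SimpleGraph.mem_edgeSet] at hf
    obtain ⟨hadj2, hcol2⟩ := hf
    obtain ⟨u, v', x, y, hu, hv', huv, hcuv, -, -, hvy, hcvy⟩ :=
      hc τ'' τ' τ h3 h2 h1 v w p2 q2 hvw hx hadj2 hcol2
    rcases hu with ⟨rfl, rfl⟩ | ⟨rfl, rfl⟩
    · exact ⟨v', huv, by rw [hcuv]; exact h2⟩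
    · refine ⟨v', hvy.symm, ?_⟩
      rw [col_swap col y v', hcvy]
      exact h1
  · exact ⟨w, hvw, hx⟩

/-- Lemma V: relation of any vertex (with an edge of color `≠ col s(p,q)`) to the
edge `pq`. -/
lemma lemV (hc : Comb Γ col) {v p q : V} (hpq : Γ.Adj p q)
    (hz : ∃ z, Γ.Adj v z ∧ col s(v, z) ≠ col s(p, q)) :
    (Γ.Adj v p ∧ col s(v, p) = col s(p, q)) ∨
    (Γ.Adj v q ∧ col s(v, q) = col s(p, q)) ∨
    (Γ.Adj v p ∧ Γ.Adj v q ∧ col s(v, p) ≠ col s(p, q) ∧ col s(v, q) ≠ col s(p, q) ∧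
      col s(v, p) ≠ col s(v, q)) := by
  obtain ⟨z, hvz, hχτ⟩ := hz
  obtain ⟨ψ, hψτ, hψχ⟩ := fin3_third (col s(p, q)) (col s(v, z)) (Ne.symm hχτ)
  obtain ⟨u, v', x, y, hu, hv', huv, hcuv, hux, hcux, hvy, hcvy⟩ :=
    hc ψ (col s(p, q)) (col s(v, z)) hψτ hψχ (Ne.symm hχτ) v z p q hvz rfl hpq rfl
  rcases hu with ⟨rfl, rfl⟩ | ⟨rfl, rfl⟩
  · rcases hv' with ⟨rfl, rfl⟩ | ⟨rfl, rfl⟩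
    · refine Or.inr (Or.inr ⟨huv, hux, ?_, ?_, ?_⟩)
      · rw [hcuv]; exact hψτ
      · rw [hcux]; exact hχτ
      · rw [hcuv, hcux]; exact hψχ
    · refine Or.inr (Or.inr ⟨hux, huv, ?_, ?_, ?_⟩)
      · rw [hcux]; exact hχτ
      · rw [hcuv]; exact hψτ
      · rw [hcux, hcuv]; exact Ne.symm hψχ
  · rcases hv' with ⟨rfl, rfl⟩ | ⟨rfl, rfl⟩
    · exact Or.inl ⟨hvy.symm, by rw [col_swap col y v']; exact hcvy⟩
    · exact Or.inr (Or.inl ⟨hvy.symm, by rw [col_swap col y v']; exact hcvy⟩)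

end Aux4
section Aux5

variable {Γ : SimpleGraph V} {col : Sym2 V → Fin 3}

lemma fin4_no_imposter : ∀ f : Fin 4 → Fin 3,
    ¬ (∀ i j : Fin 4, i ≠ j →
      (f i = pairColor i j ∧ f j = pairColor i j) ∨
      (f i ≠ f j ∧ f i ≠ pairColor i j ∧ f j ≠ pairColor i j)) := by decide

lemma fin4_exists_k : ∀ i j : Fin 4, i ≠ j → ∃ k, k ≠ i ∧ k ≠ j := by decide

lemma fin4_findk : ∀ (i : Fin 4) (c : Fin 4), ∃ k, k ≠ i ∧ pairColor i k ≠ pairColor i c ∨ True := by decide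

lemma fin4_avoid : ∀ (i : Fin 4) (x : Fin 3), ∃ k, k ≠ i ∧ pairColor i k ≠ x := by decide

lemma pairColor_distinct : ∀ i j k : Fin 4, i ≠ j → i ≠ k → j ≠ k →
    pairColor i k ≠ pairColor j k ∧ pairColor i j ≠ pairColor i k ∧
    pairColor i j ≠ pairColor j k := by decide

lemma pc_inj : ∀ m m' kk : Fin 4, m ≠ kk → m' ≠ kk →
    pairColor m kk = pairColor m' kk → m = m' := by decide

lemma pc_symm : ∀ i j : Fin 4, pairColor i j = pairColor j i := by decide

lemma fin4_exists_ne : ∀ i : Fin 4, ∃ j, j ≠ i := by decide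

lemma fin4_cover : ∀ i : Fin 4, i = 0 ∨ i = 1 ∨ i = 2 ∨ i = 3 := by decide

lemma structure_of (hc : Comb Γ col)
    (hreg : ∀ r g b : Fin 3, r ≠ g → r ≠ b → g ≠ b → ∀ p ∈ APairs Γ col r,
      (DMf Γ col g b p).card = (DPf Γ col g b p).card)
    (hK4 : (properK4s Γ col).Nonempty) :
    IsBalancedBlowupK4PlusIsolated Γ col := by
  classical
  obtain ⟨s, hs⟩ := hK4
  simp only [properK4s, Finset.mem_filter, Finset.mem_univ, true_and] at hs
  obtain ⟨a, b', c, d, hseq, hab, hac, had, hbc, hbd, hcd, q1, q2, q3, n1, n2, n3⟩ := hs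
  set base : Fin 4 → V := fun i =>
    if i = 0 then a else if i = 1 then b' else if i = 2 then c else d with hbase
  set σf : Fin 3 → Fin 3 := fun i =>
    if i = 0 then col s(a, b') else if i = 1 then col s(a, c) else col s(a, d) with hσf
  have b0 : base 0 = a := rfl
  have b1 : base 1 = b' := rfl
  have b2 : base 2 = c := rfl
  have b3 : base 3 = d := rfl
  have s0 : σf 0 = col s(a, b') := rfl
  have s1 : σf 1 = col s(a, c) := rfl
  have s2 : σf 2 = col s(a, d) := rfl
  have colFact : ∀ i j : Fin 4, i ≠ j →
      Γ.Adj (base i) (base j) ∧ col s(base i, base j) = σf (pairColor i j) := by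
    intro i j hij
    rcases fin4_cover i with rfl | rfl | rfl | rfl <;>
      rcases fin4_cover j with rfl | rfl | rfl | rfl
    · exact absurd rfl hij
    · rw [b0, b1, show pairColor 0 1 = 0 from by decide, s0]; exact ⟨hab, rfl⟩
    · rw [b0, b2, show pairColor 0 2 = 1 from by decide, s1]; exact ⟨hac, rfl⟩
    · rw [b0, b3, show pairColor 0 3 = 2 from by decide, s2]; exact ⟨had, rfl⟩
    · rw [b0, b1, show pairColor 1 0 = 0 from by decide, s0]
      exact ⟨hab.symm, col_swap col b' a⟩
    · exact absurd rfl hij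
    · rw [b1, b2, show pairColor 1 2 = 2 from by decide, s2]; exact ⟨hbc, q3.symm⟩
    · rw [b1, b3, show pairColor 1 3 = 1 from by decide, s1]; exact ⟨hbd, q2.symm⟩
    · rw [b0, b2, show pairColor 2 0 = 1 from by decide, s1]
      exact ⟨hac.symm, col_swap col c a⟩
    · rw [b1, b2, show pairColor 2 1 = 2 from by decide, s2]
      exact ⟨hbc.symm, (col_swap col c b').trans q3.symm⟩
    · exact absurd rfl hij
    · rw [b2, b3, show pairColor 2 3 = 0 from by decide, s0]; exact ⟨hcd, q1.symm⟩
    · rw [b0, b3, show pairColor 3 0 = 2 from by decide, s2]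
      exact ⟨had.symm, col_swap col d a⟩
    · rw [b1, b3, show pairColor 3 1 = 1 from by decide, s1]
      exact ⟨hbd.symm, (col_swap col d b').trans q2.symm⟩
    · rw [b2, b3, show pairColor 3 2 = 0 from by decide, s0]
      exact ⟨hcd.symm, (col_swap col d c).trans q1.symm⟩
    · exact absurd rfl hij
  have σinj : Function.Injective σf := by
    intro x y h
    rcases show x = 0 ∨ x = 1 ∨ x = 2 from by omega with rfl | rfl | rfl <;>
      rcases show y = 0 ∨ y = 1 ∨ y = 2 from by omega with rfl | rfl | rfl
    all_goals try rfl
    all_goals simp only [s0, s1, s2] at h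
    all_goals first
      | (exact absurd h n1) | (exact absurd h n2) | (exact absurd h n3)
      | (exact absurd h.symm n1) | (exact absurd h.symm n2) | (exact absurd h.symm n3)
  have σbij : Function.Bijective σf := Finite.injective_iff_bijective.mp σinj
  have hcE : ∀ τ : Fin 3, (colorEdges Γ col τ).Nonempty := by
    intro τ
    obtain ⟨x, hx⟩ := σbij.2 τ
    have mkmem : ∀ (u v : V), Γ.Adj u v → s(u, v) ∈ colorEdges Γ col (col s(u, v)) := by
      intro u v h
      simp only [colorEdges, Finset.mem_filter, Finset.mem_univ, true_and,
        SimpleGraph.mem_edgeSet]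
      exact ⟨h, trivial⟩
    rcases show x = 0 ∨ x = 1 ∨ x = 2 from by omega with rfl | rfl | rfl
    · exact ⟨s(a, b'), by rw [← hx, s0]; exact mkmem a b' hab⟩
    · exact ⟨s(a, c), by rw [← hx, s1]; exact mkmem a c hac⟩
    · exact ⟨s(a, d), by rw [← hx, s2]; exact mkmem a d had⟩
  have nisoBase : ∀ i : Fin 4, ∃ w, Γ.Adj (base i) w := by
    intro i
    obtain ⟨j, hj⟩ := fin4_exists_ne i
    exact ⟨base j, (colFact i j (Ne.symm hj)).1⟩
  have notBoth : ∀ v, (∃ w, Γ.Adj v w) → ∀ i j : Fin 4, i ≠ j →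
      ¬Γ.Adj v (base i) → ¬Γ.Adj v (base j) → False := by
    intro v hv i j hij hmi hmj
    obtain ⟨w, hw⟩ := hv
    have hz := exists_ne_color hc hcE hw (col s(base i, base j))
    rcases lemV hc (colFact i j hij).1 hz with ⟨h, -⟩ | ⟨h, -⟩ | ⟨h, -, -, -, -⟩
    · exact hmi h
    · exact hmj h
    · exact hmi h
  have lemWbase : ∀ (v : V) (i j : Fin 4), i ≠ j → Γ.Adj v (base i) → Γ.Adj v (base j) →
      col s(v, base i) = σf (pairColor i j) → col s(v, base j) = σf (pairColor i j) := by
    intro v i j hij h1 h2 hcolv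
    have hcc : col s(base i, v) = col s(base i, base j) := by
      rw [← col_swap col v (base i), hcolv, (colFact i j hij).2]
    have hW := lemW hc h2 h1.symm (colFact i j hij).1 hcc
    rw [← hW, ← col_swap col v (base i), hcolv]
  have lemWsame : ∀ (v : V) (i j : Fin 4), i ≠ j → Γ.Adj v (base i) → Γ.Adj v (base j) →
      col s(v, base i) = col s(v, base j) → col s(v, base i) = σf (pairColor i j) := by
    intro v i j hij h1 h2 heq2
    have hW := lemW hc (colFact i j hij).1 h1 h2 heq2
    rw [hW]
    exact (colFact i j hij).2
  have notAll : ∀ v : V, (∀ i : Fin 4, Γ.Adj v (base i)) → False := by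
    intro v hall
    set σ' : Equiv.Perm (Fin 3) := Equiv.ofBijective σf σbij with hσ'
    apply fin4_no_imposter (fun i => σ'.symm (col s(v, base i)))
    intro i j hij
    have key : ∀ x : Fin 3, σ'.symm x = pairColor i j ↔ x = σf (pairColor i j) := by
      intro x
      rw [Equiv.symm_apply_eq]
      exact Iff.rfl
    by_cases h1 : col s(v, base i) = σf (pairColor i j)
    · exact Or.inl ⟨(key _).mpr h1,
        (key _).mpr (lemWbase v i j hij (hall i) (hall j) h1)⟩
    · by_cases h2 : col s(v, base j) = σf (pairColor i j)
      · exfalso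
        apply h1
        have h2' : col s(v, base j) = σf (pairColor j i) := by rw [← pc_symm]; exact h2
        have := lemWbase v j i (Ne.symm hij) (hall j) (hall i) h2'
        rw [this, pc_symm j i]
      · refine Or.inr ⟨?_, ?_, ?_⟩
        · intro hE
          have heq2 : col s(v, base i) = col s(v, base j) := σ'.symm.injective hE
          exact h1 (lemWsame v i j hij (hall i) (hall j) heq2)
        · intro hE; exact h1 ((key _).mp hE)
        · intro hE; exact h2 ((key _).mp hE)
  have missedE : ∀ v : V, (∃ w, Γ.Adj v w) → ∃! i : Fin 4, ¬Γ.Adj v (base i) := by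
    intro v hv
    have hex : ∃ i, ¬Γ.Adj v (base i) := by
      by_contra hno
      push_neg at hno
      exact notAll v hno
    obtain ⟨i, hi⟩ := hex
    refine ⟨i, hi, ?_⟩
    intro j hj
    by_contra hne
    exact notBoth v hv j i hne hj hi
  set P : V → Option (Fin 4) := fun v =>
    if hv : ∃ w, Γ.Adj v w then
      some (Fintype.choose (fun k => ¬Γ.Adj v (base k)) (missedE v hv)) else none with hP
  have hPsome : ∀ (v : V) (i : Fin 4),
      P v = some i ↔ (∃ w, Γ.Adj v w) ∧ ¬Γ.Adj v (base i) := by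
    intro v i
    constructor
    · intro h
      simp only [hP] at h
      by_cases hv : ∃ w, Γ.Adj v w
      · rw [dif_pos hv] at h
        have hch := Fintype.choose_spec (fun k => ¬Γ.Adj v (base k)) (missedE v hv)
        have hE : Fintype.choose (fun k => ¬Γ.Adj v (base k)) (missedE v hv) = i :=
          Option.some.inj h
        exact ⟨hv, hE ▸ hch⟩
      · rw [dif_neg hv] at h
        exact absurd h (by simp)
    · rintro ⟨hv, hmiss⟩
      simp only [hP]
      rw [dif_pos hv]
      congr 1
      exact (missedE v hv).unique
        (Fintype.choose_spec (fun k => ¬Γ.Adj v (base k)) (missedE v hv)) hmiss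
  have hPbase : ∀ i : Fin 4, P (base i) = some i := by
    intro i
    rw [hPsome]
    exact ⟨nisoBase i, Γ.irrefl⟩
  have partAdj : ∀ (v : V) (i : Fin 4), P v = some i → ∀ j, j ≠ i → Γ.Adj v (base j) := by
    intro v i hPv j hj
    obtain ⟨hv, hmiss⟩ := (hPsome v i).mp hPv
    by_contra hnadj
    exact notBoth v hv j i hj hnadj hmiss
  have partCol : ∀ (v : V) (i : Fin 4), P v = some i → ∀ j, j ≠ i →
      col s(v, base j) = σf (pairColor i j) := by
    intro v i hPv j hj
    obtain ⟨hv, hmiss⟩ := (hPsome v i).mp hPv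
    by_cases hvb : v = base i
    · rw [hvb]
      exact (colFact i j (Ne.symm hj)).2
    · obtain ⟨w, hw⟩ := hv
      have hz := exists_ne_color hc hcE hw (col s(base i, base j))
      rcases lemV hc (colFact i j (Ne.symm hj)).1 hz with
        ⟨h, -⟩ | ⟨h, hcolv⟩ | ⟨h, -, -, -, -⟩
      · exact absurd h hmiss
      · rw [hcolv]
        exact (colFact i j (Ne.symm hj)).2
      · exact absurd h hmiss
  have hne_base : ∀ (v : V) (i : Fin 4), P v = some i → ∀ k, k ≠ i → v ≠ base k := by
    intro v i hPv k hk hvk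
    rw [hvk, hPbase k] at hPv
    exact hk (Option.some.inj hPv)
  have adjBack : ∀ (u v : V) (i j : Fin 4), P u = some i → P v = some j → i ≠ j →
      Γ.Adj u v ∧ col s(u, v) = σf (pairColor i j) := by
    intro u v i j hPu hPv hij
    obtain ⟨k, hki, hkj⟩ := fin4_exists_k i j hij
    have h1 : Γ.Adj u (base k) := partAdj u i hPu k hki
    have hc1 : col s(u, base k) = σf (pairColor i k) := partCol u i hPu k hki
    have h2 : Γ.Adj v (base k) := partAdj v j hPv k hkj
    have hc2 : col s(v, base k) = σf (pairColor j k) := partCol v j hPv k hkj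
    obtain ⟨pd1, pd2, pd3⟩ := pairColor_distinct i j k hij (Ne.symm hki) (Ne.symm hkj)
    obtain ⟨u', v', x, y, hu', hv', huv, hcuv, -, -, -, -⟩ :=
      hc (σf (pairColor i j)) (σf (pairColor j k)) (σf (pairColor i k))
        (fun h => pd3 (σinj h)) (fun h => pd2 (σinj h))
        (fun h => pd1 (σinj h).symm) u (base k) v (base k) h1 hc1 h2 hc2
    rcases hu' with ⟨hu1, -⟩ | ⟨hu1, -⟩ <;> rcases hv' with ⟨hv1, -⟩ | ⟨hv1, -⟩ <;>
      rw [hu1, hv1] at huv hcuv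
    · exact ⟨huv, hcuv⟩
    · exact absurd (σinj (hcuv.symm.trans hc1)) pd2
    · exfalso
      apply pd3
      apply σinj
      rw [← hcuv, col_swap col (base k) v, hc2]
    · exact absurd huv Γ.irrefl
  have adjForward : ∀ u v : V, Γ.Adj u v →
      ∃ i j : Fin 4, i ≠ j ∧ P u = some i ∧ P v = some j := by
    intro u v huv
    have hu : ∃ w, Γ.Adj u w := ⟨v, huv⟩
    have hv : ∃ w, Γ.Adj v w := ⟨u, huv.symm⟩
    have hPu : P u = some (Fintype.choose (fun k => ¬Γ.Adj u (base k)) (missedE u hu)) := by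
      rw [hP]; exact dif_pos hu
    have hPv : P v = some (Fintype.choose (fun k => ¬Γ.Adj v (base k)) (missedE v hv)) := by
      rw [hP]; exact dif_pos hv
    refine ⟨_, _, ?_, hPu, hPv⟩
    intro hijeq
    obtain ⟨-, hmi⟩ := (hPsome u _).mp hPu
    obtain ⟨-, hmj⟩ := (hPsome v _).mp hPv
    set i := Fintype.choose (fun k => ¬Γ.Adj u (base k)) (missedE u hu) with hidef
    rw [← hijeq] at hmj
    by_cases hub : u = base i
    · exact hmj (hub ▸ huv.symm)
    by_cases hvb : v = base i
    · exact hmi (hvb ▸ huv)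
    obtain ⟨x, hx⟩ := σbij.2 (col s(u, v))
    obtain ⟨k, hki, hpc⟩ := fin4_avoid i x
    have hadjku : Γ.Adj (base k) u := (partAdj u i hPu k hki).symm
    have hadjkv : Γ.Adj (base k) v := by
      refine (partAdj v _ hPv k ?_).symm
      rw [← hijeq]
      exact hki
    have hcu : col s(u, base k) = σf (pairColor i k) := partCol u i hPu k hki
    have hcv : col s(v, base k) = σf (pairColor i k) := by
      have h := partCol v _ hPv k (by rw [← hijeq]; exact hki)
      rw [h, ← hijeq]
    have hcc : col s(base k, u) = col s(base k, v) := by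
      rw [← col_swap col u (base k), ← col_swap col v (base k), hcu, hcv]
    have hW := lemW hc huv hadjku hadjkv hcc
    have hfin : σf (pairColor i k) = σf x :=
      hcu.symm.trans ((col_swap col u (base k)).trans (hW.trans hx.symm))
    exact hpc (σinj hfin)
  -- part membership characterization
  have memPart : ∀ (w : V) (kk m : Fin 4), kk ≠ m →
      (P w = some m ↔ Γ.Adj (base kk) w ∧ col s(base kk, w) = σf (pairColor m kk)) := by
    intro w kk m hkm
    constructor
    · intro hPw
      refine ⟨(partAdj w m hPw kk hkm).symm, ?_⟩
      rw [← col_swap col w (base kk)]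
      exact partCol w m hPw kk hkm
    · rintro ⟨hadj, hcol⟩
      have hw : ∃ z, Γ.Adj w z := ⟨base kk, hadj.symm⟩
      have hex : ∃ m', P w = some m' :=
        ⟨Fintype.choose (fun k => ¬Γ.Adj w (base k)) (missedE w hw), by
          rw [hP]; exact dif_pos hw⟩
      obtain ⟨m', hPm'⟩ := hex
      have hm'kk : kk ≠ m' := by
        intro hE
        obtain ⟨-, hmiss⟩ := (hPsome w m').mp hPm'
        rw [← hE] at hmiss
        exact hmiss hadj.symm
      have hcol' : col s(w, base kk) = σf (pairColor m' kk) := partCol w m' hPm' kk hm'kk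
      have hpc : pairColor m' kk = pairColor m kk := by
        apply σinj
        rw [← hcol', col_swap col w (base kk), hcol]
      have hmm : m' = m := pc_inj m' m kk (Ne.symm hm'kk) (Ne.symm hkm) hpc
      rw [← hmm]
      exact hPm'
  have setChar : ∀ (m kk ll : Fin 4), kk ≠ m → ll ≠ m →
      (Finset.univ.filter fun w => Γ.Adj (base kk) w ∧
        col s(base kk, w) = σf (pairColor m kk) ∧ Γ.Adj (base ll) w ∧
        col s(base ll, w) = σf (pairColor m ll))
      = Finset.univ.filter (fun w => P w = some m) := by
    intro m kk ll h1 h2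
    ext w
    simp only [Finset.mem_filter, Finset.mem_univ, true_and]
    constructor
    · rintro ⟨a1, a2, -, -⟩
      exact (memPart w kk m h1).mpr ⟨a1, a2⟩
    · intro hPw
      obtain ⟨x1, x2⟩ := (memPart w kk m h1).mp hPw
      obtain ⟨y1, y2⟩ := (memPart w ll m h2).mp hPw
      exact ⟨x1, x2, y1, y2⟩
  -- the three regularity instances
  have inst : ∀ (p1 p2 : V) (kk ll : Fin 4) (mm mp : Fin 4) (rr gg bb : Fin 3),
      rr ≠ gg → rr ≠ bb → gg ≠ bb →
      p1 = base kk → p2 = base ll → Γ.Adj p1 p2 → col s(p1, p2) = rr →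
      kk ≠ mm → ll ≠ mm → kk ≠ mp → ll ≠ mp →
      σf (pairColor mm kk) = gg → σf (pairColor mm ll) = bb →
      σf (pairColor mp kk) = bb → σf (pairColor mp ll) = gg →
      (Finset.univ.filter (fun w => P w = some mm)).card
        = (Finset.univ.filter (fun w => P w = some mp)).card := by
    intro p1 p2 kk ll mm mp rr gg bb hrg hrb hgb hp1 hp2 hadj hcolp hkm hlm hkp hlp
      w1 w2 w3 w4
    have hmem : (p1, p2) ∈ APairs Γ col rr := by
      simp only [APairs, Finset.mem_filter, Finset.mem_univ, true_and]
      exact ⟨hadj, hcolp⟩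
    have hr := hreg rr gg bb hrg hrb hgb (p1, p2) hmem
    have hDM : DMf Γ col gg bb (p1, p2) = Finset.univ.filter (fun w => P w = some mm) := by
      rw [← setChar mm kk ll hkm hlm]
      unfold DMf
      apply Finset.filter_congr
      intro w _
      rw [hp1, hp2, w1, w2]
    have hDP : DPf Γ col gg bb (p1, p2) = Finset.univ.filter (fun w => P w = some mp) := by
      rw [← setChar mp kk ll hkp hlp]
      unfold DPf
      apply Finset.filter_congr
      intro w _
      rw [hp1, hp2, w3, w4]
    rw [hDM, hDP] at hr
    exact hr
  have e23 : (Finset.univ.filter (fun w => P w = some 2)).card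
      = (Finset.univ.filter (fun w => P w = some 3)).card := by
    refine inst a b' 0 1 2 3 (col s(a, b')) (col s(a, c)) (col s(a, d)) n1 n2 n3
      b0.symm b1.symm hab rfl (by decide) (by decide) (by decide) (by decide) ?_ ?_ ?_ ?_
    · rw [show pairColor 2 0 = 1 from by decide, s1]
    · rw [show pairColor 2 1 = 2 from by decide, s2]
    · rw [show pairColor 3 0 = 2 from by decide, s2]
    · rw [show pairColor 3 1 = 1 from by decide, s1]
  have e01 : (Finset.univ.filter (fun w => P w = some 0)).card
      = (Finset.univ.filter (fun w => P w = some 1)).card := by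
    refine inst c d 2 3 0 1 (col s(a, b')) (col s(a, c)) (col s(a, d)) n1 n2 n3
      b2.symm b3.symm hcd q1.symm (by decide) (by decide) (by decide) (by decide) ?_ ?_ ?_ ?_
    · rw [show pairColor 0 2 = 1 from by decide, s1]
    · rw [show pairColor 0 3 = 2 from by decide, s2]
    · rw [show pairColor 1 2 = 2 from by decide, s2]
    · rw [show pairColor 1 3 = 1 from by decide, s1]
  have e31 : (Finset.univ.filter (fun w => P w = some 3)).card
      = (Finset.univ.filter (fun w => P w = some 1)).card := by
    refine inst a c 0 2 3 1 (col s(a, c)) (col s(a, d)) (col s(a, b'))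
      n3 (Ne.symm n1) (Ne.symm n2)
      b0.symm b2.symm hac rfl (by decide) (by decide) (by decide) (by decide) ?_ ?_ ?_ ?_
    · rw [show pairColor 3 0 = 2 from by decide, s2]
    · rw [show pairColor 3 2 = 0 from by decide, s0]
    · rw [show pairColor 1 0 = 0 from by decide, s0]
    · rw [show pairColor 1 2 = 2 from by decide, s2]
  refine ⟨P, Equiv.ofBijective σf σbij, ?_, ?_, ?_⟩
  · intro u v
    constructor
    · exact adjForward u v
    · rintro ⟨i, j, hij, hPu, hPv⟩
      exact (adjBack u v i j hPu hPv hij).1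
  · intro u v i j hPu hPv hadj
    obtain ⟨i', j', hne', hPu', hPv'⟩ := adjForward u v hadj
    rw [hPu] at hPu'
    rw [hPv] at hPv'
    have hi : i = i' := Option.some.inj hPu'
    have hj : j = j' := Option.some.inj hPv'
    have hij : i ≠ j := by
      rw [hi, hj]
      exact hne'
    exact (adjBack u v i j hPu hPv hij).2
  · intro i j
    rcases fin4_cover i with rfl | rfl | rfl | rfl <;>
      rcases fin4_cover j with rfl | rfl | rfl | rfl <;> omega
end Aux5
/-- If a 3-edge-colored graph has exactly `(1/4)·(R·G·B)^(2/3) > 0` properly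
3-edge-colored copies of `K₄`, then it is obtained from a balanced blowup of a
properly 3-edge-colored `K₄` by possibly adding a set of isolated vertices. -/
theorem stmt3 (Γ : SimpleGraph V) (col : Sym2 V → Fin 3) (R G B K : ℕ)
    (hR : R = (colorEdges Γ col 0).card)
    (hG : G = (colorEdges Γ col 1).card)
    (hB : B = (colorEdges Γ col 2).card)
    (hK : K = (properK4s Γ col).card)
    (heq : (K : ℝ) = (1 / 4) * ((R : ℝ) * G * B) ^ ((2 : ℝ) / 3))
    (hpos : 0 < K) :
    IsBalancedBlowupK4PlusIsolated Γ col := by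
  classical
  -- Step 1: the cube identity (4K)³ = (RGB)²
  have hx : (0:ℝ) ≤ (R:ℝ) * G * B := by positivity
  have h1 : ((4 * K : ℕ) : ℝ) = ((R:ℝ) * G * B) ^ ((2:ℝ)/3) := by
    push_cast
    rw [heq]
    ring
  have h2 : (((4 * K : ℕ) : ℝ)) ^ (3:ℕ) = ((R:ℝ) * G * B) ^ (2:ℕ) := by
    rw [h1, ← Real.rpow_natCast (((R:ℝ) * G * B) ^ ((2:ℝ)/3)) 3, ← Real.rpow_mul hx,
      ← Real.rpow_natCast ((R:ℝ) * G * B) 2]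
    norm_num
  have hcube : (4 * K) ^ 3 = (R * G * B) ^ 2 := by
    have : (((4 * K) ^ 3 : ℕ) : ℝ) = (((R * G * B) ^ 2 : ℕ) : ℝ) := by
      push_cast
      push_cast at h2
      exact h2
    exact_mod_cast this
  -- Step 2: the three chain inequalities
  have hchain : ∀ r g b : Fin 3, r ≠ g → r ≠ b → g ≠ b →
      4 * K ≤ (colorEdges Γ col b).card * (colorEdges Γ col g).card := by
    intro r g b hrg hrb hgb
    calc 4 * K = 4 * (properK4s Γ col).card := by rw [hK]
      _ ≤ (OT Γ col r g b).card := fourK_le_OT r g b hrg hrb hgb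
      _ ≤ (TU Γ col r g b).card := card_OT_le_card_TU r g b
      _ ≤ _ := card_TU_le r g b hrg hrb hgb
  have hGB : 4 * K ≤ G * B := by
    have h := hchain 0 1 2 (by decide) (by decide) (by decide)
    rw [← hB, ← hG] at h
    nlinarith [h]
  have hRB : 4 * K ≤ R * B := by
    have h := hchain 1 0 2 (by decide) (by decide) (by decide)
    rw [← hB, ← hR] at h
    nlinarith [h]
  have hRG : 4 * K ≤ R * G := by
    have h := hchain 2 0 1 (by decide) (by decide) (by decide)
    rw [← hG, ← hR] at h
    nlinarith [h]
  -- Step 3: pinch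
  have hK4 : 0 < (4 * K) * (4 * K) := by positivity
  have pinch : ∀ X Y Z : ℕ, 4 * K ≤ X → 4 * K ≤ Y → 4 * K ≤ Z →
      X * (Y * Z) = (4 * K) ^ 3 → X = 4 * K := by
    intro X Y Z hX hY hZ hXYZ
    have hle : X * ((4 * K) * (4 * K)) ≤ X * (Y * Z) :=
      Nat.mul_le_mul_left _ (Nat.mul_le_mul hY hZ)
    rw [hXYZ] at hle
    have hle' : X * ((4 * K) * (4 * K)) ≤ (4 * K) * ((4 * K) * (4 * K)) := by
      calc X * ((4 * K) * (4 * K)) ≤ (4 * K) ^ 3 := hle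
        _ = (4 * K) * ((4 * K) * (4 * K)) := by ring
    have hXle : X ≤ 4 * K := Nat.le_of_mul_le_mul_right
      (by rw [mul_comm X, mul_comm (4 * K)] at hle' ⊢; exact hle') hK4
    omega
  have eGB : G * B = 4 * K := by
    refine pinch (G * B) (R * B) (R * G) hGB hRB hRG ?_
    rw [hcube]; ring
  have eRB : R * B = 4 * K := by
    refine pinch (R * B) (G * B) (R * G) hRB hGB hRG ?_
    rw [hcube]; ring
  have eRG : R * G = 4 * K := by
    refine pinch (R * G) (G * B) (R * B) hRG hGB hRB ?_
    rw [hcube]; ring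
  have hRpos : 0 < R := by
    rcases Nat.eq_zero_or_pos R with h | h
    · rw [h] at eRB; omega
    · exact h
  have hGpos : 0 < G := by
    rcases Nat.eq_zero_or_pos G with h | h
    · rw [h] at eRG; omega
    · exact h
  have hBpos : 0 < B := by
    rcases Nat.eq_zero_or_pos B with h | h
    · rw [h] at eRB; omega
    · exact h
  -- Step 4: product of any two distinct color classes equals 4K
  have cover3 : ∀ x : Fin 3, x = 0 ∨ x = 1 ∨ x = 2 := by decide
  have hprodAll : ∀ g b : Fin 3, g ≠ b →
      (colorEdges Γ col b).card * (colorEdges Γ col g).card = 4 * K := by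
    intro g b hgb
    rcases cover3 g with rfl | rfl | rfl <;> rcases cover3 b with rfl | rfl | rfl
    · exact absurd rfl hgb
    · rw [← hG, ← hR, mul_comm]; exact eRG
    · rw [← hB, ← hR, mul_comm]; exact eRB
    · rw [← hR, ← hG]; exact eRG
    · exact absurd rfl hgb
    · rw [← hB, ← hG, mul_comm]; exact eGB
    · rw [← hR, ← hB]; exact eRB
    · rw [← hG, ← hB]; exact eGB
    · exact absurd rfl hgb
  -- Step 5: equalities along every chain
  have hTUeq : ∀ r g b : Fin 3, r ≠ g → r ≠ b → g ≠ b →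
      (TU Γ col r g b).card
        = (colorEdges Γ col b).card * (colorEdges Γ col g).card := by
    intro r g b hrg hrb hgb
    have l1 := fourK_le_OT (Γ := Γ) (col := col) r g b hrg hrb hgb
    have l2 := card_OT_le_card_TU (Γ := Γ) (col := col) r g b
    have l3 := card_TU_le (Γ := Γ) (col := col) r g b hrg hrb hgb
    have l4 := hprodAll g b hgb
    rw [← hK] at l1
    omega
  have hOTeq : ∀ r g b : Fin 3, r ≠ g → r ≠ b → g ≠ b →
      (OT Γ col r g b).card = (TU Γ col r g b).card := by
    intro r g b hrg hrb hgb
    have l1 := fourK_le_OT (Γ := Γ) (col := col) r g b hrg hrb hgb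
    have l2 := card_OT_le_card_TU (Γ := Γ) (col := col) r g b
    have l3 := card_TU_le (Γ := Γ) (col := col) r g b hrg hrb hgb
    have l4 := hprodAll g b hgb
    rw [← hK] at l1
    omega
  -- Step 6: conclude
  have hcomb : Comb Γ col :=
    comb_of_surj (fun r g b hrg hrb hgb =>
      TU_surj r g b hrg hrb hgb (hTUeq r g b hrg hrb hgb))
  have hregAll : ∀ r g b : Fin 3, r ≠ g → r ≠ b → g ≠ b → ∀ p ∈ APairs Γ col r,
      (DMf Γ col g b p).card = (DPf Γ col g b p).card :=
    fun r g b hrg hrb hgb => Reg_of_eq r g b (hOTeq r g b hrg hrb hgb)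
  have hne : (properK4s Γ col).Nonempty := by
    rw [← Finset.card_pos, ← hK]
    exact hpos
  exact structure_of hcomb hregAll hne

end RainbowTri
end
end
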